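/- arXiv:1710.09783 — 4 statements merged into one kernel-verified Lean document; each statement's English description precedes it below -/
import Mathlib

section
/- Let A : [0,∞) → [0,∞) be a càdlàg function, λ > 0, and W > 0 such that e^{-λt} A(t) → W as t → ∞. Define τ_n = inf{t ≥ 0 : A(t) ≥ n}. Then τ_n < ∞ for all n, τ_n → ∞, and A(τ_n)/n → 1 as n → ∞. -/
open Filter Set Topology

/-- First-passage times of a càdlàg function growing like `W e^{λ t}` with `W > 0`:
every level `n` is reached (`τ_n < ∞`), `τ_n → ∞`, and `A(τ_n)/n → 1`. -/
theorem stmt_2 (A : ℝ → ℝ) (lam W : ℝ) (hlam : 0 < lam) (hW : 0 < W)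
    (hnonneg : ∀ t, 0 ≤ t → 0 ≤ A t)
    (hrc : ∀ t, 0 ≤ t → ContinuousWithinAt A (Ici t) t)
    (hll : ∀ t, 0 < t → ∃ l, Tendsto A (nhdsWithin t (Iio t)) (nhds l))
    (hlim : Tendsto (fun t => Real.exp (-lam * t) * A t) atTop (nhds W))
    (τ : ℕ → ℝ) (hτ : ∀ n, τ n = sInf {t | 0 ≤ t ∧ (n : ℝ) ≤ A t}) :
    (∀ n : ℕ, {t | 0 ≤ t ∧ (n : ℝ) ≤ A t}.Nonempty) ∧
      Tendsto τ atTop atTop ∧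
      Tendsto (fun n : ℕ => A (τ n) / n) atTop (nhds 1) := by
  -- two-sided exponential bounds
  have fact0 : ∀ ε : ℝ, 0 < ε → ∃ T : ℝ, 0 ≤ T ∧ ∀ t, T ≤ t →
      (W - ε) * Real.exp (lam * t) ≤ A t ∧ A t ≤ (W + ε) * Real.exp (lam * t) := by
    intro ε hε
    have h1 : ∀ᶠ t in atTop, |Real.exp (-lam * t) * A t - W| < ε := by
      have := Metric.tendsto_nhds.mp hlim ε hε
      simpa [Real.dist_eq] using this
    obtain ⟨T, hT⟩ := eventually_atTop.mp h1
    refine ⟨max T 0, le_max_right _ _, fun t ht => ?_⟩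
    have h2 := hT t (le_trans (le_max_left _ _) ht)
    have h3 := abs_lt.mp h2
    have hE : Real.exp (lam * t) * Real.exp (-lam * t) = 1 := by
      rw [← Real.exp_add]; ring_nf; exact Real.exp_zero
    have hEpos : 0 < Real.exp (lam * t) := Real.exp_pos _
    have hA : Real.exp (-lam * t) * A t * Real.exp (lam * t) = A t := by
      rw [mul_comm, ← mul_assoc, hE, one_mul]
    constructor
    · calc (W - ε) * Real.exp (lam * t)
          ≤ (Real.exp (-lam * t) * A t) * Real.exp (lam * t) :=
            mul_le_mul_of_nonneg_right (by linarith [h3.1]) hEpos.le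
        _ = A t := hA
    · calc A t = (Real.exp (-lam * t) * A t) * Real.exp (lam * t) := hA.symm
        _ ≤ (W + ε) * Real.exp (lam * t) :=
            mul_le_mul_of_nonneg_right (by linarith [h3.2]) hEpos.le
  -- nonemptiness
  have hbbS : ∀ n : ℕ, BddBelow {t | 0 ≤ t ∧ (n : ℝ) ≤ A t} :=
    fun n => ⟨0, fun t ht => ht.1⟩
  have hnonempty : ∀ n : ℕ, {t | 0 ≤ t ∧ (n : ℝ) ≤ A t}.Nonempty := by
    intro n
    obtain ⟨T, hT0, hT⟩ := fact0 (W / 2) (by positivity)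
    have hgrow : Tendsto (fun t => (W - W / 2) * Real.exp (lam * t)) atTop atTop := by
      apply Tendsto.const_mul_atTop (by linarith : (0:ℝ) < W - W / 2)
      exact Real.tendsto_exp_atTop.comp (tendsto_atTop_atTop_of_monotone
        (fun a b hab => by nlinarith) (fun b => ⟨b / lam, by field_simp; exact le_rfl⟩))
    have h1 : ∀ᶠ t in atTop, (n : ℝ) ≤ (W - W / 2) * Real.exp (lam * t) :=
      hgrow.eventually_ge_atTop _
    have h2 : ∀ᶠ t in atTop, T ≤ t := eventually_ge_atTop T
    obtain ⟨t, ht1, ht2⟩ := (h1.and h2).exists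
    exact ⟨t, le_trans hT0 ht2, le_trans ht1 (hT t ht2).1⟩
  have hτ0 : ∀ n : ℕ, 0 ≤ τ n := by
    intro n; rw [hτ n]; exact le_csInf (hnonempty n) (fun t ht => ht.1)
  -- below τ n, A < n
  have hτlb : ∀ (n : ℕ) (t : ℝ), 0 ≤ t → t < τ n → A t < n := by
    intro n t ht0 htτ
    by_contra h
    push_neg at h
    have : τ n ≤ t := by rw [hτ n]; exact csInf_le (hbbS n) ⟨ht0, h⟩
    linarith
  -- A (τ n) ≥ n
  have hτmem : ∀ n : ℕ, (n : ℝ) ≤ A (τ n) := by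
    intro n
    have hcl : τ n ∈ closure {t | 0 ≤ t ∧ (n : ℝ) ≤ A t} := by
      rw [hτ n]; exact csInf_mem_closure (hnonempty n) (hbbS n)
    have hNe : (𝓝[{t | 0 ≤ t ∧ (n : ℝ) ≤ A t}] (τ n)).NeBot :=
      mem_closure_iff_nhdsWithin_neBot.mp hcl
    have hsub : {t | 0 ≤ t ∧ (n : ℝ) ≤ A t} ⊆ Ici (τ n) := by
      intro t ht; rw [hτ n]; exact csInf_le (hbbS n) ht
    have ht : Tendsto A (𝓝[{t | 0 ≤ t ∧ (n : ℝ) ≤ A t}] (τ n)) (𝓝 (A (τ n))) :=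
      (hrc (τ n) (hτ0 n)).mono_left (nhdsWithin_mono _ hsub)
    exact ge_of_tendsto ht (eventually_nhdsWithin_of_forall (fun t ht => ht.2))
  -- boundedness on compacts
  have hbdd : ∀ M : ℝ, BddAbove (A '' Icc 0 M) := by
    intro M
    refine isCompact_Icc.induction_on (by simp) ?_ ?_ ?_
    · exact fun s t hst ht => ht.mono (image_mono (f := A) hst)
    · intro s t hs ht; rw [image_union]; exact hs.union ht
    · intro x hx
      have hx0 : (0:ℝ) ≤ x := hx.1
      have hr : ∀ᶠ y in 𝓝[Ici x] x, A y < A x + 1 :=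
        (hrc x hx0).eventually_lt_const (lt_add_one (A x))
      obtain ⟨C, hl⟩ : ∃ C, ∀ᶠ y in 𝓝[Ico 0 x] x, A y < C := by
        rcases eq_or_lt_of_le hx0 with h | h
        · refine ⟨0, ?_⟩; rw [← h]; simp [nhdsWithin_empty]
        · obtain ⟨l, hl⟩ := hll x h
          exact ⟨l + 1, (hl.eventually_lt_const (lt_add_one l)).filter_mono
            (nhdsWithin_mono _ Ico_subset_Iio_self)⟩
      set D := max (A x + 1) C with hD
      have hsub : Icc 0 M ⊆ Ico 0 x ∪ Ici x := by
        intro y hy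
        rcases lt_or_ge y x with h | h
        · exact Or.inl ⟨hy.1, h⟩
        · exact Or.inr h
      have hle : 𝓝[Icc 0 M] x ≤ 𝓝[Ico 0 x] x ⊔ 𝓝[Ici x] x := by
        rw [← nhdsWithin_union]; exact nhdsWithin_mono _ hsub
      have hmem : {y | A y ≤ D} ∈ 𝓝[Icc 0 M] x := by
        apply hle
        rw [mem_sup]
        constructor
        · exact hl.mono (fun y hy => le_trans hy.le (le_max_right _ _))
        · exact hr.mono (fun y hy => le_trans hy.le (le_max_left _ _))
      refine ⟨{y | A y ≤ D}, hmem, ⟨D, ?_⟩⟩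
      rintro z ⟨y, hy, rfl⟩
      exact hy
  -- τ → ∞
  have htend : Tendsto τ atTop atTop := by
    rw [tendsto_atTop]
    intro b
    obtain ⟨C, hC⟩ := hbdd (max b 0)
    obtain ⟨N, hN⟩ := exists_nat_gt C
    filter_upwards [eventually_ge_atTop N] with n hn
    have hCn : C < (n : ℝ) := lt_of_lt_of_le hN (Nat.cast_le.mpr hn)
    have : max b 0 ≤ τ n := by
      rw [hτ n]
      apply le_csInf (hnonempty n)
      intro t ht
      by_contra hlt
      push_neg at hlt
      have : A t ≤ C := hC ⟨t, ⟨ht.1, hlt.le⟩, rfl⟩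
      linarith [ht.2]
    exact le_trans (le_max_left _ _) this
  refine ⟨hnonempty, htend, ?_⟩
  -- final limit
  rw [Metric.tendsto_atTop]
  intro ε' hε'
  set ε := min (W / 2) (ε' * W / 8) with hεdef
  have hε : 0 < ε := lt_min (by positivity) (by positivity)
  have hεW : ε ≤ W / 2 := min_le_left _ _
  have hε8 : ε ≤ ε' * W / 8 := min_le_right _ _
  have hWε : 0 < W - ε := by linarith
  obtain ⟨T, hT0, hT⟩ := fact0 ε hε
  have h1 : ∀ᶠ n : ℕ in atTop, T + 1 ≤ τ n := htend.eventually (eventually_ge_atTop (T + 1))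
  have h2 : ∀ᶠ n : ℕ in atTop, 1 ≤ n := eventually_ge_atTop 1
  obtain ⟨N, hN⟩ := eventually_atTop.mp (h1.and h2)
  refine ⟨N, fun n hn => ?_⟩
  obtain ⟨hτT, hn1⟩ := hN n hn
  have hn1' : (1 : ℝ) ≤ n := Nat.one_le_cast.mpr hn1
  have hnpos : (0 : ℝ) < n := by linarith
  have hτT' : T < τ n := by linarith
  -- (W - ε) * exp(lam * τ n) ≤ n
  have key : (W - ε) * Real.exp (lam * τ n) ≤ n := by
    have hcont : Tendsto (fun t => (W - ε) * Real.exp (lam * t)) (𝓝[Iio (τ n)] (τ n))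
        (𝓝 ((W - ε) * Real.exp (lam * τ n))) := by
      apply Tendsto.mono_left _ nhdsWithin_le_nhds
      have hc : Continuous (fun t : ℝ => (W - ε) * Real.exp (lam * t)) := by continuity
      exact hc.tendsto _
    refine le_of_tendsto hcont ?_
    have hmemIoo : Ioo T (τ n) ∈ 𝓝[Iio (τ n)] (τ n) := by
      rw [← Ioi_inter_Iio]
      exact inter_mem (mem_nhdsWithin_of_mem_nhds (Ioi_mem_nhds hτT')) self_mem_nhdsWithin
    filter_upwards [hmemIoo] with t ht
    have hAt := (hT t ht.1.le).1
    have hAtn := hτlb n t (le_trans hT0 ht.1.le) ht.2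
    linarith
  have hAup : A (τ n) ≤ (W + ε) * Real.exp (lam * τ n) := (hT (τ n) (by linarith)).2
  have hAlow : (n : ℝ) ≤ A (τ n) := hτmem n
  have hquot1 : 1 ≤ A (τ n) / n := by rw [le_div_iff₀ hnpos]; linarith
  have hquot2 : A (τ n) / n ≤ (W + ε) / (W - ε) := by
    rw [div_le_div_iff₀ hnpos hWε]
    calc A (τ n) * (W - ε)
        ≤ ((W + ε) * Real.exp (lam * τ n)) * (W - ε) :=
          mul_le_mul_of_nonneg_right hAup hWε.le
      _ = (W + ε) * ((W - ε) * Real.exp (lam * τ n)) := by ring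
      _ ≤ (W + ε) * n := mul_le_mul_of_nonneg_left key (by linarith)
  have hfinal : (W + ε) / (W - ε) ≤ 1 + ε' / 2 := by
    rw [div_le_iff₀ hWε]
    have p1 : ε' * ε ≤ ε' * (W / 2) := mul_le_mul_of_nonneg_left hεW hε'.le
    have p2 : (1 + ε' / 2) * (W - ε) = W - ε + ε' * W / 2 - ε' * ε / 2 := by ring
    linarith [p1, p2, hε8]
  have habs : |A (τ n) / n - 1| ≤ ε' / 2 := abs_le.mpr ⟨by linarith, by linarith⟩
  rw [Real.dist_eq]
  linarith
end

section
/- Let A : [0,∞) → [0,∞) be a càdlàg function with e^{-λt}A(t) → W > 0 (λ > 0), τ_n = inf{t : A(t) ≥ n}, and let ν_n be positive reals with n·ν_n → θ ∈ (0,∞). Then for every fixed t ∈ ℝ, ∫_{-τ_n}^{t} ν_n A(τ_n + s) ds → (θ/λ) e^{λt} as n → ∞. -/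
open Filter Set intervalIntegral

section AuxLemmas

open MeasureTheory

lemma cadlag_bdd (A : ℝ → ℝ)
    (hrc : ∀ t, 0 ≤ t → ContinuousWithinAt A (Ici t) t)
    (hll : ∀ t, 0 < t → ∃ l, Tendsto A (nhdsWithin t (Iio t)) (nhds l))
    (T : ℝ) : ∃ C, ∀ u, 0 ≤ u → u ≤ T → A u ≤ C := by
  have key : ∀ t : ℝ, ∃ δ : ℝ, 0 < δ ∧ ∃ c : ℝ,
      ∀ u ∈ Ioo (t - δ) (t + δ), 0 ≤ u → A u ≤ c := by
    intro t
    rcases lt_or_ge t 0 with ht | ht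
    · refine ⟨-t/2, by linarith, 0, ?_⟩
      rintro u ⟨_, hu2⟩ hu0
      exfalso; nlinarith
    · have h1 : {u | A u < A t + 1} ∈ nhdsWithin t (Ici t) :=
        (hrc t ht) (Iio_mem_nhds (by linarith))
      rw [Metric.mem_nhdsWithin_iff] at h1
      obtain ⟨δ1, hδ1, hball1⟩ := h1
      rcases eq_or_lt_of_le ht with heq | ht0
      · refine ⟨δ1, hδ1, A t + 1, ?_⟩
        rintro u ⟨hu1, hu2⟩ hu0
        have : u ∈ Metric.ball t δ1 ∩ Ici t := by
          constructor
          · rw [Metric.mem_ball, Real.dist_eq, abs_lt]; constructor <;> linarith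
          · rw [mem_Ici, ← heq]; exact hu0
        exact le_of_lt (hball1 this)
      · obtain ⟨l, hl⟩ := hll t ht0
        have h2 : {u | A u < l + 1} ∈ nhdsWithin t (Iio t) :=
          hl (Iio_mem_nhds (by linarith))
        rw [Metric.mem_nhdsWithin_iff] at h2
        obtain ⟨δ2, hδ2, hball2⟩ := h2
        refine ⟨min δ1 δ2, lt_min hδ1 hδ2, max (A t + 1) (l + 1), ?_⟩
        rintro u ⟨hu1, hu2⟩ hu0
        have hd : dist u t < min δ1 δ2 := by
          rw [Real.dist_eq, abs_lt]; constructor <;> [linarith [hu1]; linarith [hu2]]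
        rcases le_or_gt t u with h | h
        · have : u ∈ Metric.ball t δ1 ∩ Ici t :=
            ⟨Metric.mem_ball.2 (lt_of_lt_of_le hd (min_le_left _ _)), h⟩
          exact le_trans (le_of_lt (hball1 this)) (le_max_left _ _)
        · have : u ∈ Metric.ball t δ2 ∩ Iio t :=
            ⟨Metric.mem_ball.2 (lt_of_lt_of_le hd (min_le_right _ _)), h⟩
          exact le_trans (le_of_lt (hball2 this)) (le_max_right _ _)
  choose δ hδ c hc using key
  have hcov : Icc (0:ℝ) T ⊆ ⋃ t : ℝ, Ioo (t - δ t) (t + δ t) := by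
    intro u _
    exact mem_iUnion.2 ⟨u, by constructor <;> [linarith [hδ u]; linarith [hδ u]]⟩
  obtain ⟨s, hs⟩ := isCompact_Icc.elim_finite_subcover
    (fun t : ℝ => Ioo (t - δ t) (t + δ t)) (fun t => isOpen_Ioo) hcov
  refine ⟨((s.sup fun t => ⌈c t⌉₊ : ℕ) : ℝ), fun u hu0 huT => ?_⟩
  obtain ⟨t, hts, hut⟩ := mem_iUnion₂.1 (hs ⟨hu0, huT⟩)
  calc A u ≤ c t := hc t u hut hu0
    _ ≤ (⌈c t⌉₊ : ℝ) := Nat.le_ceil _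
    _ ≤ _ := Nat.cast_le.2 (Finset.le_sup (f := fun t => ⌈c t⌉₊) hts)

lemma cadlag_bdd' (A : ℝ → ℝ) (T : ℝ) (hbdd : ∃ C, ∀ u, 0 ≤ u → u ≤ T → A u ≤ C)
    (hmeas : Measurable A) (hnonneg : ∀ t, 0 ≤ t → 0 ≤ A t)
    (a b : ℝ) (ha : 0 ≤ a) (hb : 0 ≤ b) (haT : a ≤ T) (hbT : b ≤ T) :
    IntervalIntegrable A MeasureTheory.volume a b := by
  obtain ⟨C, hC⟩ := hbdd
  apply MeasureTheory.IntegrableOn.intervalIntegrable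
  apply MeasureTheory.Measure.integrableOn_of_bounded (M := C)
  · exact ne_of_lt (by simpa using measure_Icc_lt_top (a := min a b) (b := max a b))
  · exact hmeas.aestronglyMeasurable
  · rw [MeasureTheory.ae_restrict_iff' measurableSet_uIcc]
    filter_upwards with u hu
    rw [uIcc] at hu
    have h0 : 0 ≤ u := le_trans (le_min ha hb) hu.1
    have hT : u ≤ T := le_trans hu.2 (max_le haT hbT)
    rw [Real.norm_eq_abs, abs_of_nonneg (hnonneg u h0)]
    exact hC u h0 hT

lemma A_top (A : ℝ → ℝ) (lam W : ℝ) (hlam : 0 < lam) (hW : 0 < W)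
    (hlim : Tendsto (fun t => Real.exp (-lam * t) * A t) atTop (nhds W)) :
    Tendsto A atTop atTop := by
  have h1 : ∀ᶠ t in atTop, W/2 * Real.exp (lam * t) ≤ A t := by
    filter_upwards [hlim.eventually (eventually_gt_nhds (by linarith : W/2 < W))] with t ht
    have he : 0 < Real.exp (lam * t) := Real.exp_pos _
    have : Real.exp (-lam * t) = (Real.exp (lam * t))⁻¹ := by
      rw [← Real.exp_neg]; ring_nf
    rw [this] at ht
    rw [inv_mul_eq_div] at ht
    calc W/2 * Real.exp (lam*t) ≤ (A t / Real.exp (lam*t)) * Real.exp (lam*t) := by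
          apply mul_le_mul_of_nonneg_right (le_of_lt ht) (le_of_lt he)
      _ = A t := by field_simp
  have h2 : Tendsto (fun t => W/2 * Real.exp (lam * t)) atTop atTop := by
    apply Tendsto.const_mul_atTop (by linarith)
    exact Real.tendsto_exp_atTop.comp (tendsto_id.const_mul_atTop hlam)
  exact tendsto_atTop_mono' atTop h1 h2

lemma S_ne (A : ℝ → ℝ) (lam W : ℝ) (hlam : 0 < lam) (hW : 0 < W)
    (hlim : Tendsto (fun t => Real.exp (-lam * t) * A t) atTop (nhds W)) (n : ℕ) :
    {t | 0 ≤ t ∧ (n:ℝ) ≤ A t}.Nonempty := by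
  have := (A_top A lam W hlam hW hlim).eventually_ge_atTop (n:ℝ)
  rcases (this.and (eventually_ge_atTop 0)).exists with ⟨t, h1, h2⟩
  exact ⟨t, h2, h1⟩

lemma tau_nonneg (A : ℝ → ℝ) (n : ℕ) (τn : ℝ)
    (hne : {t | 0 ≤ t ∧ (n:ℝ) ≤ A t}.Nonempty)
    (hτn : τn = sInf {t | 0 ≤ t ∧ (n : ℝ) ≤ A t}) : 0 ≤ τn := by
  rw [hτn]; exact le_csInf hne (fun t ht => ht.1)

lemma A_tau_ge (A : ℝ → ℝ) (n : ℕ) (τn : ℝ)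
    (hne : {t | 0 ≤ t ∧ (n:ℝ) ≤ A t}.Nonempty)
    (hτn : τn = sInf {t | 0 ≤ t ∧ (n : ℝ) ≤ A t})
    (hrc : ∀ t, 0 ≤ t → ContinuousWithinAt A (Ici t) t) : (n:ℝ) ≤ A τn := by
  by_contra h
  push_neg at h
  have h0 : 0 ≤ τn := tau_nonneg A n τn hne hτn
  have hev : {u | A u < n} ∈ nhdsWithin τn (Ici τn) :=
    (hrc τn h0) (Iio_mem_nhds h)
  rw [Metric.mem_nhdsWithin_iff] at hev
  obtain ⟨δ, hδ, hball⟩ := hev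
  have hbdd : BddBelow {t | 0 ≤ t ∧ (n:ℝ) ≤ A t} := ⟨0, fun t ht => ht.1⟩
  obtain ⟨t, ht, htlt⟩ : ∃ t ∈ {t | 0 ≤ t ∧ (n:ℝ) ≤ A t}, t < τn + δ := by
    apply exists_lt_of_csInf_lt hne
    rw [← hτn]; linarith
  have hτt : τn ≤ t := hτn ▸ csInf_le hbdd ht
  have : t ∈ Metric.ball τn δ ∩ Ici τn := by
    refine ⟨?_, hτt⟩
    rw [Metric.mem_ball, Real.dist_eq, abs_lt]
    constructor <;> linarith
  exact absurd ht.2 (not_le.2 (hball this))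

lemma A_lt_before (A : ℝ → ℝ) (n : ℕ) (τn : ℝ)
    (hτn : τn = sInf {t | 0 ≤ t ∧ (n : ℝ) ≤ A t})
    (u : ℝ) (h0 : 0 ≤ u) (hu : u < τn) : A u < n := by
  by_contra h
  push_neg at h
  have : u ∈ {t | 0 ≤ t ∧ (n:ℝ) ≤ A t} := ⟨h0, h⟩
  have := csInf_le ⟨0, fun t ht => ht.1⟩ this
  rw [← hτn] at this; linarith

lemma tau_top (A : ℝ → ℝ) (τ : ℕ → ℝ)
    (hτ : ∀ n, τ n = sInf {t | 0 ≤ t ∧ (n : ℝ) ≤ A t})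
    (hne : ∀ n : ℕ, {t | 0 ≤ t ∧ (n:ℝ) ≤ A t}.Nonempty)
    (hbdd : ∀ T : ℝ, ∃ C, ∀ u, 0 ≤ u → u ≤ T → A u ≤ C) :
    Tendsto τ atTop atTop := by
  rw [tendsto_atTop]
  intro M
  obtain ⟨C, hC⟩ := hbdd (max M 0)
  filter_upwards [eventually_gt_atTop ⌈C⌉₊] with n hn
  have hCn : C < (n : ℝ) := lt_of_le_of_lt (Nat.le_ceil C) (Nat.cast_lt.2 hn)
  have : max M 0 ≤ τ n := by
    rw [hτ n]
    apply le_csInf (hne n)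
    intro t ht
    by_contra h
    push_neg at h
    have := hC t ht.1 (le_of_lt h)
    have := ht.2
    linarith
  exact le_trans (le_max_left _ _) this

lemma n_exp_tau (A : ℝ → ℝ) (lam W : ℝ)
    (hlim : Tendsto (fun t => Real.exp (-lam * t) * A t) atTop (nhds W))
    (τ : ℕ → ℝ) (hτtop : Tendsto τ atTop atTop)
    (hAτ : ∀ n : ℕ, (n:ℝ) ≤ A (τ n))
    (hAlt : ∀ n : ℕ, ∀ u, 0 ≤ u → u < τ n → A u < n) :
    Tendsto (fun n : ℕ => (n : ℝ) * Real.exp (-lam * τ n)) atTop (nhds W) := by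
  rw [Metric.tendsto_atTop]
  intro ε hε
  obtain ⟨T0, hT0⟩ := (Metric.tendsto_atTop.1 hlim) (ε/2) (by linarith)
  set T1 := max T0 0 with hT1
  obtain ⟨N, hN⟩ := (tendsto_atTop.1 hτtop (T1 + 1)).exists_forall_of_atTop
  refine ⟨N, fun n hn => ?_⟩
  have hτn : T1 + 1 ≤ τ n := hN n hn
  have hτT0 : T0 ≤ τ n := by
    have : T0 ≤ T1 := le_max_left _ _
    linarith
  have hepos : (0:ℝ) < Real.exp (-lam * τ n) := Real.exp_pos _
  have hup : (n:ℝ) * Real.exp (-lam * τ n) < W + ε/2 := by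
    have h1 : (n:ℝ) * Real.exp (-lam * τ n) ≤ Real.exp (-lam * τ n) * A (τ n) := by
      rw [mul_comm]
      exact mul_le_mul_of_nonneg_left (hAτ n) (le_of_lt hepos)
    have h2 := hT0 (τ n) hτT0
    rw [Real.dist_eq, abs_lt] at h2
    linarith
  have hlow : W - ε/2 ≤ (n:ℝ) * Real.exp (-lam * τ n) := by
    have hcont : Tendsto (fun u => (n:ℝ) * Real.exp (-lam * u))
        (nhdsWithin (τ n) (Iio (τ n))) (nhds ((n:ℝ) * Real.exp (-lam * τ n))) := by
      apply Tendsto.mono_left _ nhdsWithin_le_nhds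
      exact (Continuous.tendsto (by continuity) (τ n))
    have hNB : (nhdsWithin (τ n) (Iio (τ n))).NeBot := by
      apply nhdsLT_neBot
    apply ge_of_tendsto hcont
    have hmem : Ioo T1 (τ n) ∈ nhdsWithin (τ n) (Iio (τ n)) :=
      Ioo_mem_nhdsLT_of_mem ⟨by linarith, le_refl _⟩
    filter_upwards [hmem] with u hu
    have hu0 : 0 ≤ u := le_trans (le_max_right T0 0) (le_of_lt hu.1)
    have hAu : A u < n := hAlt n u hu0 hu.2
    have h2 := hT0 u (le_trans (le_max_left _ _) (le_of_lt hu.1))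
    rw [Real.dist_eq, abs_lt] at h2
    have he : (0:ℝ) < Real.exp (-lam * u) := Real.exp_pos _
    nlinarith [h2.1]
  rw [Real.dist_eq, abs_lt]
  constructor <;> linarith

lemma exp_antideriv (lam : ℝ) (hlam : 0 < lam) (a b : ℝ) :
    ∫ u in a..b, Real.exp (lam * u) = Real.exp (lam * b) / lam - Real.exp (lam * a) / lam := by
  apply intervalIntegral.integral_eq_sub_of_hasDerivAt
  · intro u _
    have H : HasDerivAt (fun x => Real.exp (lam * x)) (Real.exp (lam * u) * lam) u := by
      have h1 : HasDerivAt (fun x : ℝ => lam * x) lam u := by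
        simpa using (hasDerivAt_id u).const_mul lam
      exact (Real.hasDerivAt_exp (lam * u)).comp u h1
    have := H.div_const lam
    convert this.congr_deriv (mul_div_cancel_right₀ _ hlam.ne') using 1
  · exact (Real.continuous_exp.comp (continuous_const.mul continuous_id)).intervalIntegrable a b

lemma int_asymp (A : ℝ → ℝ) (lam W : ℝ) (hlam : 0 < lam) (hW : 0 < W)
    (hlim : Tendsto (fun t => Real.exp (-lam * t) * A t) atTop (nhds W))
    (hnonneg : ∀ t, 0 ≤ t → 0 ≤ A t)
    (hint : ∀ a b : ℝ, 0 ≤ a → 0 ≤ b → IntervalIntegrable A volume a b) :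
    Tendsto (fun T : ℝ => Real.exp (-lam * T) * ∫ u in (0:ℝ)..T, A u) atTop (nhds (W / lam)) := by
  rw [Metric.tendsto_atTop]
  intro ε hε
  set ε' := min (lam * ε / 4) W with hε'def
  have hε'pos : 0 < ε' := lt_min (by positivity) hW
  have hε'W : ε' ≤ W := min_le_right _ _
  have hε'ε : ε' / lam ≤ ε / 4 := by
    rw [div_le_iff₀ hlam]
    calc ε' ≤ lam * ε / 4 := min_le_left _ _
      _ = ε / 4 * lam := by ring
  obtain ⟨T0, hT0⟩ := (Metric.tendsto_atTop.1 hlim) ε' hε'pos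
  obtain ⟨T1, hT10, hT1ge⟩ : ∃ T1 : ℝ, 0 ≤ T1 ∧ T0 ≤ T1 :=
    ⟨max T0 0, le_max_right _ _, le_max_left _ _⟩
  obtain ⟨J1, hJ1def⟩ : ∃ J1 : ℝ, J1 = ∫ u in (0:ℝ)..T1, A u := ⟨_, rfl⟩
  have hJ1nonneg : 0 ≤ J1 := by
    rw [hJ1def]
    apply intervalIntegral.integral_nonneg hT10
    intro u hu; exact hnonneg u hu.1
  obtain ⟨K, hKdef⟩ : ∃ K : ℝ, K = J1 + W * Real.exp (lam * T1) / lam := ⟨_, rfl⟩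
  have hKnonneg : 0 ≤ K := by rw [hKdef]; positivity
  have hK0 : Tendsto (fun T : ℝ => Real.exp (-lam * T) * K) atTop (nhds 0) := by
    have h1 : Tendsto (fun T : ℝ => Real.exp (-lam * T)) atTop (nhds 0) := by
      apply Real.tendsto_exp_atBot.comp
      exact Tendsto.const_mul_atTop_of_neg (neg_neg_iff_pos.2 hlam) tendsto_id
    simpa using h1.mul_const K
  have hKev : ∀ᶠ T : ℝ in atTop, Real.exp (-lam * T) * K < ε / 2 := by
    apply hK0.eventually (eventually_lt_nhds (by linarith))
  obtain ⟨T2, hT2⟩ := (hKev.and (eventually_ge_atTop T1)).exists_forall_of_atTop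
  refine ⟨T2, fun T hT => ?_⟩
  obtain ⟨hKT, hTT1⟩ := hT2 T hT
  have hpt : ∀ u ∈ Icc T1 T,
      (W - ε') * Real.exp (lam * u) ≤ A u ∧ A u ≤ (W + ε') * Real.exp (lam * u) := by
    intro u hu
    have h2 := hT0 u (le_trans hT1ge hu.1)
    rw [Real.dist_eq, abs_lt] at h2
    have he : Real.exp (-lam * u) * Real.exp (lam * u) = 1 := by
      rw [← Real.exp_add]; norm_num
    have hep : (0:ℝ) < Real.exp (lam * u) := Real.exp_pos _
    have hAu : (Real.exp (-lam * u) * A u) * Real.exp (lam * u) = A u := by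
      calc (Real.exp (-lam * u) * A u) * Real.exp (lam * u)
          = A u * (Real.exp (-lam * u) * Real.exp (lam * u)) := by ring
        _ = A u := by rw [he, mul_one]
    constructor
    · have h1 : W - ε' < Real.exp (-lam * u) * A u := by linarith [h2.1]
      have h3 := mul_lt_mul_of_pos_right h1 hep
      rw [hAu] at h3; linarith
    · have h1 : Real.exp (-lam * u) * A u < W + ε' := by linarith [h2.2]
      have h3 := mul_lt_mul_of_pos_right h1 hep
      rw [hAu] at h3; linarith
  have hT1T : T1 ≤ T := hTT1
  have hintA : IntervalIntegrable A volume T1 T := hint T1 T hT10 (le_trans hT10 hT1T)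
  have hintE : ∀ c : ℝ, IntervalIntegrable (fun u => c * Real.exp (lam * u)) volume T1 T :=
    fun c => (continuous_const.mul
      (Real.continuous_exp.comp (continuous_const.mul continuous_id))).intervalIntegrable _ _
  have hup : ∫ u in T1..T, A u
      ≤ (W + ε') * (Real.exp (lam * T) / lam - Real.exp (lam * T1) / lam) := by
    calc ∫ u in T1..T, A u ≤ ∫ u in T1..T, (W + ε') * Real.exp (lam * u) :=
          intervalIntegral.integral_mono_on hT1T hintA (hintE _) (fun u hu => (hpt u hu).2)
      _ = (W + ε') * (Real.exp (lam * T) / lam - Real.exp (lam * T1) / lam) := by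
          rw [intervalIntegral.integral_const_mul, exp_antideriv lam hlam]
  have hlow : (W - ε') * (Real.exp (lam * T) / lam - Real.exp (lam * T1) / lam)
      ≤ ∫ u in T1..T, A u := by
    calc (W - ε') * (Real.exp (lam * T) / lam - Real.exp (lam * T1) / lam)
        = ∫ u in T1..T, (W - ε') * Real.exp (lam * u) := by
          rw [intervalIntegral.integral_const_mul, exp_antideriv lam hlam]
      _ ≤ ∫ u in T1..T, A u :=
          intervalIntegral.integral_mono_on hT1T (hintE _) hintA (fun u hu => (hpt u hu).1)
  have hsplit : ∫ u in (0:ℝ)..T, A u = J1 + ∫ u in T1..T, A u := by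
    rw [hJ1def, intervalIntegral.integral_add_adjacent_intervals (hint 0 T1 le_rfl hT10) hintA]
  have heT : (0:ℝ) < Real.exp (-lam * T) := Real.exp_pos _
  have heinv : Real.exp (-lam * T) * Real.exp (lam * T) = 1 := by
    rw [← Real.exp_add]; norm_num
  have hWε : 0 ≤ W - ε' := by linarith
  have hJ1K : J1 ≤ K := by
    rw [hKdef]
    have : 0 ≤ W * Real.exp (lam * T1) / lam := by positivity
    linarith
  have hdivsum : (W + ε') / lam = W / lam + ε' / lam := add_div _ _ _
  rw [Real.dist_eq, abs_lt]
  have expandm : Real.exp (-lam * T) * ((W - ε') * (Real.exp (lam * T) / lam - Real.exp (lam * T1) / lam))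
      = (W - ε') / lam - Real.exp (-lam * T) * ((W - ε') * Real.exp (lam * T1) / lam) := by
    linear_combination ((W - ε') / lam) * heinv
  have expandp : Real.exp (-lam * T) * ((W + ε') * (Real.exp (lam * T) / lam - Real.exp (lam * T1) / lam))
      = (W + ε') / lam - Real.exp (-lam * T) * ((W + ε') * Real.exp (lam * T1) / lam) := by
    linear_combination ((W + ε') / lam) * heinv
  constructor
  · have a1 : 0 ≤ Real.exp (-lam * T) * J1 := mul_nonneg (le_of_lt heT) hJ1nonneg
    have a2 := mul_le_mul_of_nonneg_left hlow (le_of_lt heT)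
    have a3 : Real.exp (-lam * T) * ((W - ε') * Real.exp (lam * T1) / lam)
        ≤ Real.exp (-lam * T) * K := by
      apply mul_le_mul_of_nonneg_left _ (le_of_lt heT)
      rw [hKdef]
      have h5 : (W - ε') * Real.exp (lam * T1) / lam ≤ W * Real.exp (lam * T1) / lam := by
        gcongr
        linarith
      linarith
    have hmdiv : (W - ε') / lam = W / lam - ε' / lam := by ring
    rw [hsplit, mul_add]
    rw [expandm] at a2
    linarith [a1, a2, a3, hKT, hε'ε]
  · have a1 : Real.exp (-lam * T) * J1 ≤ Real.exp (-lam * T) * K :=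
      mul_le_mul_of_nonneg_left hJ1K (le_of_lt heT)
    have a2 := mul_le_mul_of_nonneg_left hup (le_of_lt heT)
    rw [expandp] at a2
    have a3 : 0 ≤ Real.exp (-lam * T) * ((W + ε') * Real.exp (lam * T1) / lam) := by positivity
    rw [hsplit, mul_add]
    linarith [a1, a2, a3, hKT, hε'ε]

end AuxLemmas

/-- For càdlàg `A` with `e^{-λ t} A(t) → W > 0`, first-passage times `τ_n`, and
mutation rates `ν_n` with `n ν_n → θ`, for each `t ∈ ℝ`:
`∫_{-τ_n}^t ν_n A(τ_n + s) ds → (θ/λ) e^{λ t}`. -/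
theorem stmt_4 (A : ℝ → ℝ) (lam W θ : ℝ) (hlam : 0 < lam) (hW : 0 < W) (hθ : 0 < θ)
    (hmeas : Measurable A)
    (hnonneg : ∀ t, 0 ≤ t → 0 ≤ A t)
    (hrc : ∀ t, 0 ≤ t → ContinuousWithinAt A (Ici t) t)
    (hll : ∀ t, 0 < t → ∃ l, Tendsto A (nhdsWithin t (Iio t)) (nhds l))
    (hlim : Tendsto (fun t => Real.exp (-lam * t) * A t) atTop (nhds W))
    (τ : ℕ → ℝ) (hτ : ∀ n, τ n = sInf {t | 0 ≤ t ∧ (n : ℝ) ≤ A t})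
    (ν : ℕ → ℝ) (hν : ∀ n, 0 < ν n)
    (hνlim : Tendsto (fun n : ℕ => (n : ℝ) * ν n) atTop (nhds θ)) :
    ∀ t : ℝ,
      Tendsto (fun n : ℕ => ∫ s in (-(τ n))..t, ν n * A (τ n + s)) atTop
        (nhds (θ / lam * Real.exp (lam * t))) := by
  intro t
  have hbdd : ∀ T : ℝ, ∃ C, ∀ u, 0 ≤ u → u ≤ T → A u ≤ C := cadlag_bdd A hrc hll
  have hint : ∀ a b : ℝ, 0 ≤ a → 0 ≤ b → IntervalIntegrable A MeasureTheory.volume a b :=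
    fun a b ha hb => cadlag_bdd' A (max a b) (hbdd _) hmeas hnonneg a b ha hb
      (le_max_left _ _) (le_max_right _ _)
  have hne : ∀ n : ℕ, {t | 0 ≤ t ∧ (n:ℝ) ≤ A t}.Nonempty := fun n => S_ne A lam W hlam hW hlim n
  have hτ0 : ∀ n, 0 ≤ τ n := fun n => tau_nonneg A n (τ n) (hne n) (hτ n)
  have hAτ : ∀ n : ℕ, (n:ℝ) ≤ A (τ n) := fun n => A_tau_ge A n (τ n) (hne n) (hτ n) hrc
  have hAlt : ∀ n : ℕ, ∀ u, 0 ≤ u → u < τ n → A u < n :=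
    fun n u h0 hu => A_lt_before A n (τ n) (hτ n) u h0 hu
  have hτtop : Tendsto τ atTop atTop := tau_top A τ hτ hne hbdd
  have h8 : Tendsto (fun n : ℕ => (n : ℝ) * Real.exp (-lam * τ n)) atTop (nhds W) :=
    n_exp_tau A lam W hlim τ hτtop hAτ hAlt
  have hIA := int_asymp A lam W hlam hW hlim hnonneg hint
  have hτt : Tendsto (fun n : ℕ => τ n + t) atTop atTop :=
    tendsto_atTop_add_const_right _ t hτtop
  have h3 : Tendsto (fun n : ℕ => Real.exp (-lam * (τ n + t)) * ∫ u in (0:ℝ)..(τ n + t), A u)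
      atTop (nhds (W / lam)) := hIA.comp hτt
  have h2 : Tendsto (fun n : ℕ => ((n:ℝ) * Real.exp (-lam * τ n))⁻¹) atTop (nhds W⁻¹) :=
    h8.inv₀ (ne_of_gt hW)
  have hmain : Tendsto (fun n : ℕ =>
      (((n:ℝ) * ν n) * ((n:ℝ) * Real.exp (-lam * τ n))⁻¹ * Real.exp (lam * t))
        * (Real.exp (-lam * (τ n + t)) * ∫ u in (0:ℝ)..(τ n + t), A u)) atTop
      (nhds (θ * W⁻¹ * Real.exp (lam * t) * (W / lam))) :=
    (((hνlim.mul h2).mul_const _).mul h3)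
  have hval : θ * W⁻¹ * Real.exp (lam * t) * (W / lam) = θ / lam * Real.exp (lam * t) := by
    field_simp
  rw [hval] at hmain
  apply hmain.congr'
  filter_upwards [eventually_gt_atTop 0] with n hn
  have hchg : ∫ s in (-(τ n))..t, ν n * A (τ n + s)
      = ν n * ∫ u in (0:ℝ)..(τ n + t), A u := by
    rw [intervalIntegral.integral_const_mul]
    congr 1
    rw [intervalIntegral.integral_comp_add_left A (τ n)]
    congr 1
    ring
  rw [hchg]
  have hn0 : ((n:ℝ)) ≠ 0 := Nat.cast_ne_zero.2 hn.ne'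
  have ha0 : Real.exp (-lam * τ n) ≠ 0 := (Real.exp_pos _).ne'
  have hb0 : Real.exp (lam * t) ≠ 0 := (Real.exp_pos _).ne'
  have hexp : Real.exp (-lam * (τ n + t))
      = Real.exp (-lam * τ n) * (Real.exp (lam * t))⁻¹ := by
    rw [← Real.exp_neg, ← Real.exp_add]
    congr 1
    ring
  rw [hexp]
  field_simp
end

section
/- Let r(z) be a probability generating function of a ℤ_{≥0}-valued random variable with P(Y = k) ~ c·k^{-1-γ} as k → ∞ for constants c > 0 and γ ∈ (0,∞). Then the compound Poisson random variable B* with generating function exp(m(r(z)-1)), m > 0, satisfies lim_{k→∞} k^{1+γ} P(B* = k) = m·c. -/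
open MeasureTheory ProbabilityTheory Filter

lemma hasSum_prob {Ω : Type*} [MeasurableSpace Ω] (P : Measure Ω) [IsProbabilityMeasure P]
    (X : Ω → ℕ) (hX : Measurable X) :
    HasSum (fun k => (P {ω | X ω = k}).toReal) 1 := by
  have hmeas : ∀ k : ℕ, MeasurableSet {ω | X ω = k} := fun k => hX (measurableSet_singleton k)
  have hdisj : Pairwise (Function.onFun Disjoint fun k => {ω | X ω = k}) := by
    intro i j hij
    simp only [Function.onFun, Set.disjoint_left]
    rintro ω (h1 : X ω = i) (h2 : X ω = j)
    exact hij (h1 ▸ h2 ▸ rfl)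
  have hunion : (⋃ k, {ω | X ω = k}) = Set.univ := by
    ext ω; simp
  have htsum : (∑' k, P {ω | X ω = k}) = 1 := by
    rw [← measure_iUnion hdisj hmeas, hunion, measure_univ]
  have hne : ∀ k, P {ω | X ω = k} ≠ ⊤ := fun k => measure_ne_top P _
  have hsummable : Summable (fun k => (P {ω | X ω = k}).toReal) :=
    ENNReal.summable_toReal (by rw [htsum]; exact ENNReal.one_ne_top)
  have : (∑' k, (P {ω | X ω = k}).toReal) = 1 := by
    rw [← ENNReal.tsum_toReal_eq hne, htsum, ENNReal.toReal_one]
  exact this ▸ hsummable.hasSum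

lemma tendsto_rpow_mul_shift {γ A : ℝ} (hγ : 0 < γ) {u : ℕ → ℝ}
    (h : Tendsto (fun k : ℕ => (k : ℝ) ^ (1 + γ) * u k) atTop (nhds A)) (l : ℕ) :
    Tendsto (fun k : ℕ => (k : ℝ) ^ (1 + γ) * u (k - l)) atTop (nhds A) := by
  have hsub : Tendsto (fun k : ℕ => k - l) atTop atTop := tendsto_sub_atTop_nat l
  have h2 : Tendsto (fun k : ℕ => ((k - l : ℕ) : ℝ) ^ (1 + γ) * u (k - l)) atTop (nhds A) :=
    h.comp hsub
  have hratio : Tendsto (fun k : ℕ => (k : ℝ) / ((k - l : ℕ) : ℝ)) atTop (nhds 1) := by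
    have hden : Tendsto (fun x : ℝ => x - l) atTop atTop :=
      tendsto_atTop_add_const_right _ _ tendsto_id
    have hfrac : Tendsto (fun x : ℝ => (l : ℝ) / (x - l)) atTop (nhds 0) :=
      Tendsto.div_atTop tendsto_const_nhds hden
    have h1 : Tendsto (fun x : ℝ => 1 + (l : ℝ) / (x - l)) atTop (nhds 1) := by
      simpa using tendsto_const_nhds.add hfrac
    have h1' : Tendsto (fun x : ℝ => x / (x - l)) atTop (nhds 1) := by
      refine Tendsto.congr' ?_ h1
      filter_upwards [eventually_gt_atTop (l : ℝ)] with x hx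
      have hne : x - l ≠ 0 := by linarith
      field_simp
      ring
    have := h1'.comp tendsto_natCast_atTop_atTop (α := ℕ)
    refine Tendsto.congr' ?_ this
    filter_upwards [eventually_ge_atTop l] with k hk
    simp [Function.comp, Nat.cast_sub hk]
  have hrpow : Tendsto (fun k : ℕ => ((k : ℝ) / ((k - l : ℕ) : ℝ)) ^ (1 + γ)) atTop (nhds 1) := by
    have := hratio.rpow_const (p := 1 + γ) (Or.inr (by linarith))
    simpa using this
  have hmul := hrpow.mul h2
  rw [one_mul] at hmul
  refine Tendsto.congr' ?_ hmul
  filter_upwards [eventually_ge_atTop (l + 1)] with k hk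
  have hkl : 0 < k - l := by omega
  have hpos : (0 : ℝ) < ((k - l : ℕ) : ℝ) := by exact_mod_cast hkl
  rw [← mul_assoc, Real.div_rpow (Nat.cast_nonneg k) hpos.le,
    div_mul_cancel₀ _ (ne_of_gt (Real.rpow_pos_of_pos hpos _))]

lemma sum_comp_le_one {q : ℕ → ℝ} (h0 : ∀ k, 0 ≤ q k) (hs : HasSum q 1)
    (s : Finset ℕ) (g : ℕ → ℕ) (hg : ∀ x ∈ s, ∀ y ∈ s, g x = g y → x = y) :
    ∑ l ∈ s, q (g l) ≤ 1 := by
  rw [← Finset.sum_image hg]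
  exact sum_le_hasSum _ (fun k _ => h0 k) hs

lemma conv_bound {γ C : ℝ} (hγ : 0 < γ) (hC : 0 ≤ C) {p : ℕ → ℝ} {q : ℕ → ℕ → ℝ}
    (hp0 : ∀ k, 0 ≤ p k) (hps : HasSum p 1)
    (hq0 : ∀ j k, 0 ≤ q j k) (hqs : ∀ j, HasSum (q j) 1)
    (hqz : ∀ k, 1 ≤ k → q 0 k = 0)
    (hrec : ∀ j k, q (j+1) k = ∑ l ∈ Finset.range (k+1), q j (k-l) * p l)
    (hpC : ∀ k : ℕ, (k : ℝ) ^ (1 + γ) * p k ≤ C) :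
    ∀ (j k : ℕ), 1 ≤ k → (k : ℝ) ^ (1 + γ) * q j k ≤ C * (j : ℝ) ^ (2 + γ) := by
  intro j
  induction j with
  | zero =>
    intro k hk
    rw [hqz k hk, mul_zero]
    positivity
  | succ j ih =>
    intro k hk
    have hkR : (1 : ℝ) ≤ (k : ℝ) := by exact_mod_cast hk
    have hjp1 : (0 : ℝ) < (j : ℝ) + 1 := by positivity
    rw [hrec, Finset.mul_sum]
    rw [← Finset.sum_filter_add_sum_filter_not (Finset.range (k+1)) (fun l => k ≤ (j+1)*l)]
    have hA : ∑ l ∈ (Finset.range (k+1)).filter (fun l => k ≤ (j+1)*l),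
        (k : ℝ) ^ (1 + γ) * (q j (k-l) * p l) ≤ C * ((j : ℝ) + 1) ^ (1 + γ) := by
      have hterm : ∀ l ∈ (Finset.range (k+1)).filter (fun l => k ≤ (j+1)*l),
          (k : ℝ) ^ (1 + γ) * (q j (k-l) * p l)
            ≤ q j (k-l) * (C * ((j : ℝ) + 1) ^ (1 + γ)) := by
        intro l hl
        simp only [Finset.mem_filter, Finset.mem_range] at hl
        have hl1 : 1 ≤ l := by nlinarith [hl.2, hk]
        have hlR : (0 : ℝ) < (l : ℝ) := by exact_mod_cast hl1
        have hkle : (k : ℝ) ≤ ((j : ℝ) + 1) * l := by exact_mod_cast hl.2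
        have h1 : (k : ℝ) ^ (1 + γ) ≤ (((j : ℝ) + 1) * l) ^ (1 + γ) :=
          Real.rpow_le_rpow (by positivity) hkle (by linarith)
        have h2 : (((j : ℝ) + 1) * l) ^ (1 + γ)
            = ((j : ℝ) + 1) ^ (1 + γ) * (l : ℝ) ^ (1 + γ) :=
          Real.mul_rpow (by positivity) (by positivity)
        have h3 : (k : ℝ) ^ (1 + γ) * p l ≤ ((j : ℝ) + 1) ^ (1 + γ) * C := by
          calc (k : ℝ) ^ (1 + γ) * p l
              ≤ ((j : ℝ) + 1) ^ (1 + γ) * (l : ℝ) ^ (1 + γ) * p l := by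
                rw [← h2]; exact mul_le_mul_of_nonneg_right h1 (hp0 l)
            _ ≤ ((j : ℝ) + 1) ^ (1 + γ) * C := by
                rw [mul_assoc]
                exact mul_le_mul_of_nonneg_left (hpC l) (by positivity)
        calc (k : ℝ) ^ (1 + γ) * (q j (k-l) * p l)
            = q j (k-l) * ((k : ℝ) ^ (1 + γ) * p l) := by ring
          _ ≤ q j (k-l) * (((j : ℝ) + 1) ^ (1 + γ) * C) :=
              mul_le_mul_of_nonneg_left h3 (hq0 _ _)
          _ = q j (k-l) * (C * ((j : ℝ) + 1) ^ (1 + γ)) := by ring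
      calc ∑ l ∈ (Finset.range (k+1)).filter (fun l => k ≤ (j+1)*l),
            (k : ℝ) ^ (1 + γ) * (q j (k-l) * p l)
          ≤ ∑ l ∈ (Finset.range (k+1)).filter (fun l => k ≤ (j+1)*l),
            q j (k-l) * (C * ((j : ℝ) + 1) ^ (1 + γ)) := Finset.sum_le_sum hterm
        _ = (∑ l ∈ (Finset.range (k+1)).filter (fun l => k ≤ (j+1)*l), q j (k-l))
            * (C * ((j : ℝ) + 1) ^ (1 + γ)) := by rw [Finset.sum_mul]
        _ ≤ 1 * (C * ((j : ℝ) + 1) ^ (1 + γ)) := by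
            refine mul_le_mul_of_nonneg_right ?_ (by positivity)
            refine sum_comp_le_one (hq0 j) (hqs j) _ _ ?_
            intro x hx y hy hxy
            simp only [Finset.mem_filter, Finset.mem_range] at hx hy
            omega
        _ = C * ((j : ℝ) + 1) ^ (1 + γ) := by rw [one_mul]
    have hB : ∑ l ∈ (Finset.range (k+1)).filter (fun l => ¬ k ≤ (j+1)*l),
        (k : ℝ) ^ (1 + γ) * (q j (k-l) * p l) ≤ C * (j : ℝ) * ((j : ℝ) + 1) ^ (1 + γ) := by
      have hterm : ∀ l ∈ (Finset.range (k+1)).filter (fun l => ¬ k ≤ (j+1)*l),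
          (k : ℝ) ^ (1 + γ) * (q j (k-l) * p l)
            ≤ p l * (C * (j : ℝ) * ((j : ℝ) + 1) ^ (1 + γ)) := by
        intro l hl
        simp only [Finset.mem_filter, Finset.mem_range] at hl
        have hlk : (j+1)*l < k := by omega
        have hllk : l < k := lt_of_le_of_lt (Nat.le_mul_of_pos_left l (Nat.succ_pos j)) hlk
        have hkl1 : 1 ≤ k - l := by omega
        rcases Nat.eq_zero_or_pos j with hj0 | hj1
        · subst hj0
          rw [hqz _ hkl1]
          simp
        · have hjR : (0 : ℝ) < (j : ℝ) := by exact_mod_cast hj1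
          -- jk ≤ (j+1)(k-l)
          have hnat : j * k ≤ (j+1) * (k - l) := by
            have e1 : (j+1) * (k - l) + (j+1) * l = (j+1) * k := by
              rw [← Nat.mul_add]; congr 1; omega
            have e2 : (j+1) * k = j * k + k := by ring
            omega
          have hkey : (j : ℝ) * k ≤ ((j : ℝ) + 1) * ((k - l : ℕ) : ℝ) := by
            exact_mod_cast hnat
          have hklR : (0 : ℝ) < ((k - l : ℕ) : ℝ) := by exact_mod_cast hkl1
          -- k ≤ ((j+1)/j) * (k-l)
          have hkle : (k : ℝ) ≤ (((j : ℝ) + 1) / j) * ((k - l : ℕ) : ℝ) := by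
            rw [div_mul_eq_mul_div, le_div_iff₀ hjR]
            nlinarith
          have h1 : (k : ℝ) ^ (1 + γ)
              ≤ (((j : ℝ) + 1) / j) ^ (1 + γ) * ((k - l : ℕ) : ℝ) ^ (1 + γ) := by
            rw [← Real.mul_rpow (by positivity) (by positivity)]
            exact Real.rpow_le_rpow (by positivity) hkle (by linarith)
          have h2 : (k : ℝ) ^ (1 + γ) * q j (k-l)
              ≤ (((j : ℝ) + 1) / j) ^ (1 + γ) * (C * (j : ℝ) ^ (2 + γ)) := by
            calc (k : ℝ) ^ (1 + γ) * q j (k-l)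
                ≤ (((j : ℝ) + 1) / j) ^ (1 + γ) * ((k - l : ℕ) : ℝ) ^ (1 + γ) * q j (k-l) :=
                  mul_le_mul_of_nonneg_right h1 (hq0 _ _)
              _ = (((j : ℝ) + 1) / j) ^ (1 + γ)
                  * (((k - l : ℕ) : ℝ) ^ (1 + γ) * q j (k-l)) := by ring
              _ ≤ (((j : ℝ) + 1) / j) ^ (1 + γ) * (C * (j : ℝ) ^ (2 + γ)) :=
                  mul_le_mul_of_nonneg_left (ih _ hkl1) (by positivity)
          have h3 : (((j : ℝ) + 1) / j) ^ (1 + γ) * (C * (j : ℝ) ^ (2 + γ))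
              = C * (j : ℝ) * ((j : ℝ) + 1) ^ (1 + γ) := by
            rw [Real.div_rpow (by positivity) hjR.le]
            have hj2 : (j : ℝ) ^ (2 + γ) = (j : ℝ) ^ (1 + γ) * (j : ℝ) := by
              rw [show (2:ℝ) + γ = (1 + γ) + 1 by ring, Real.rpow_add hjR, Real.rpow_one]
            rw [hj2]
            have hne : (j : ℝ) ^ (1 + γ) ≠ 0 := by positivity
            field_simp
          calc (k : ℝ) ^ (1 + γ) * (q j (k-l) * p l)
              = ((k : ℝ) ^ (1 + γ) * q j (k-l)) * p l := by ring
            _ ≤ (C * (j : ℝ) * ((j : ℝ) + 1) ^ (1 + γ)) * p l := by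
                rw [← h3]; exact mul_le_mul_of_nonneg_right h2 (hp0 l)
            _ = p l * (C * (j : ℝ) * ((j : ℝ) + 1) ^ (1 + γ)) := by ring
      calc ∑ l ∈ (Finset.range (k+1)).filter (fun l => ¬ k ≤ (j+1)*l),
            (k : ℝ) ^ (1 + γ) * (q j (k-l) * p l)
          ≤ ∑ l ∈ (Finset.range (k+1)).filter (fun l => ¬ k ≤ (j+1)*l),
            p l * (C * (j : ℝ) * ((j : ℝ) + 1) ^ (1 + γ)) := Finset.sum_le_sum hterm
        _ = (∑ l ∈ (Finset.range (k+1)).filter (fun l => ¬ k ≤ (j+1)*l), p l)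
            * (C * (j : ℝ) * ((j : ℝ) + 1) ^ (1 + γ)) := by rw [Finset.sum_mul]
        _ ≤ 1 * (C * (j : ℝ) * ((j : ℝ) + 1) ^ (1 + γ)) := by
            refine mul_le_mul_of_nonneg_right ?_ (by positivity)
            exact sum_le_hasSum _ (fun k _ => hp0 k) hps
        _ = C * (j : ℝ) * ((j : ℝ) + 1) ^ (1 + γ) := by rw [one_mul]
    have hfinal : C * ((j : ℝ) + 1) ^ (1 + γ) + C * (j : ℝ) * ((j : ℝ) + 1) ^ (1 + γ)
        = C * ((j + 1 : ℕ) : ℝ) ^ (2 + γ) := by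
      push_cast
      have h2 : ((j : ℝ) + 1) ^ (2 + γ) = ((j : ℝ) + 1) ^ (1 + γ) * ((j : ℝ) + 1) := by
        rw [show (2:ℝ) + γ = (1 + γ) + 1 by ring, Real.rpow_add hjp1, Real.rpow_one]
      rw [h2]
      ring
    linarith [hA, hB]

lemma conv_tendsto {γ c C : ℝ} (hγ : 0 < γ) (hC : 0 ≤ C) {p : ℕ → ℝ} {q : ℕ → ℕ → ℝ}
    (hp0 : ∀ k, 0 ≤ p k) (hps : HasSum p 1)
    (hq0 : ∀ j k, 0 ≤ q j k) (hqs : ∀ j, HasSum (q j) 1)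
    (hqz : ∀ k, 1 ≤ k → q 0 k = 0)
    (hrec : ∀ j k, q (j+1) k = ∑ l ∈ Finset.range (k+1), q j (k-l) * p l)
    (hpC : ∀ k : ℕ, (k : ℝ) ^ (1 + γ) * p k ≤ C)
    (htail : Tendsto (fun k : ℕ => (k : ℝ) ^ (1 + γ) * p k) atTop (nhds c)) :
    ∀ j : ℕ, Tendsto (fun k : ℕ => (k : ℝ) ^ (1 + γ) * q j k) atTop (nhds ((j : ℝ) * c)) := by
  have hbd := conv_bound hγ hC hp0 hps hq0 hqs hqz hrec hpC
  intro j
  induction j with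
  | zero =>
    have : Tendsto (fun _ : ℕ => (0 : ℝ)) atTop (nhds 0) := tendsto_const_nhds
    simp only [Nat.cast_zero, zero_mul]
    refine Tendsto.congr' ?_ this
    filter_upwards [eventually_ge_atTop 1] with k hk
    rw [hqz k hk, mul_zero]
  | succ j ih =>
    set e := 1 + γ with he
    -- the two pieces as tsums
    set f1 : ℕ → ℕ → ℝ := fun k l => if 2*l ≤ k then p l * ((k : ℝ) ^ e * q j (k-l)) else 0
      with hf1
    set f2 : ℕ → ℕ → ℝ := fun k s => if 2*s < k then q j s * ((k : ℝ) ^ e * p (k-s)) else 0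
      with hf2
    have hdecomp : ∀ k : ℕ, (k : ℝ) ^ e * q (j+1) k = (∑' l, f1 k l) + (∑' s, f2 k s) := by
      intro k
      have ht1 : (∑' l, f1 k l) = ∑ l ∈ Finset.range (k+1), f1 k l := by
        refine tsum_eq_sum ?_
        intro l hl
        simp only [Finset.mem_range, not_lt] at hl
        simp only [hf1]
        rw [if_neg (by omega)]
      have ht2 : (∑' s, f2 k s) = ∑ s ∈ Finset.range (k+1), f2 k s := by
        refine tsum_eq_sum ?_
        intro s hs
        simp only [Finset.mem_range, not_lt] at hs
        simp only [hf2]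
        rw [if_neg (by omega)]
      rw [ht1, ht2, hrec, Finset.mul_sum]
      rw [← Finset.sum_filter_add_sum_filter_not (Finset.range (k+1)) (fun l => 2*l ≤ k)
        (fun l => (k : ℝ) ^ e * (q j (k-l) * p l))]
      congr 1
      · rw [Finset.sum_filter]
        apply Finset.sum_congr rfl
        intro l _
        simp only [hf1]
        by_cases h : 2*l ≤ k
        · rw [if_pos h, if_pos h]; ring
        · rw [if_neg h, if_neg h]
      · have hrhs : ∑ s ∈ Finset.range (k+1), f2 k s
            = ∑ s ∈ (Finset.range (k+1)).filter (fun s => 2*s < k),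
                q j s * ((k : ℝ) ^ e * p (k-s)) := by
          rw [Finset.sum_filter]
        rw [hrhs]
        refine Finset.sum_nbij' (fun l => k - l) (fun s => k - s) ?_ ?_ ?_ ?_ ?_
        · intro l hl
          simp only [Finset.mem_filter, Finset.mem_range] at hl ⊢
          omega
        · intro s hs
          simp only [Finset.mem_filter, Finset.mem_range] at hs ⊢
          omega
        · intro l hl
          simp only [Finset.mem_filter, Finset.mem_range] at hl
          show k - (k - l) = l
          omega
        · intro s hs
          simp only [Finset.mem_filter, Finset.mem_range] at hs
          show k - (k - s) = s
          omega
        · intro l hl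
          simp only [Finset.mem_filter, Finset.mem_range] at hl
          show (k : ℝ) ^ e * (q j (k-l) * p l) = q j (k-l) * ((k : ℝ) ^ e * p (k - (k - l)))
          have h1 : k - (k - l) = l := by omega
          rw [h1]
          ring
    have h2e : (0:ℝ) < 2 := by norm_num
    have hS1 : Tendsto (fun k => ∑' l, f1 k l) atTop (nhds ((j : ℝ) * c)) := by
      have hlim : ∀ l : ℕ, Tendsto (fun k => f1 k l) atTop (nhds (p l * ((j : ℝ) * c))) := by
        intro l
        have hsh := tendsto_rpow_mul_shift hγ ih l
        have : Tendsto (fun k : ℕ => p l * ((k : ℝ) ^ e * q j (k - l))) atTop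
            (nhds (p l * ((j : ℝ) * c))) := (hsh.const_mul (p l))
        refine Tendsto.congr' ?_ this
        filter_upwards [eventually_ge_atTop (2*l)] with k hk
        simp only [hf1]
        rw [if_pos hk]
      have hbound : ∀ᶠ k : ℕ in atTop, ∀ l, ‖f1 k l‖ ≤ p l * ((2:ℝ) ^ e * (C * (j : ℝ) ^ (2+γ))) := by
        filter_upwards [eventually_ge_atTop 1] with k hk
        intro l
        simp only [hf1]
        by_cases h : 2*l ≤ k
        · rw [if_pos h]
          have hkl : 1 ≤ k - l := by omega
          have hk2 : (k : ℝ) ≤ 2 * ((k - l : ℕ) : ℝ) := by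
            have : k ≤ 2 * (k - l) := by omega
            exact_mod_cast this
          have hr : (k : ℝ) ^ e ≤ (2:ℝ) ^ e * ((k - l : ℕ) : ℝ) ^ e := by
            rw [← Real.mul_rpow h2e.le (Nat.cast_nonneg _)]
            exact Real.rpow_le_rpow (Nat.cast_nonneg _) hk2 (by rw [he]; linarith)
          have hq : (k : ℝ) ^ e * q j (k - l) ≤ (2:ℝ) ^ e * (C * (j : ℝ) ^ (2+γ)) := by
            calc (k : ℝ) ^ e * q j (k - l)
                ≤ (2:ℝ) ^ e * ((k - l : ℕ) : ℝ) ^ e * q j (k - l) :=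
                  mul_le_mul_of_nonneg_right hr (hq0 _ _)
              _ = (2:ℝ) ^ e * (((k - l : ℕ) : ℝ) ^ e * q j (k - l)) := by ring
              _ ≤ (2:ℝ) ^ e * (C * (j : ℝ) ^ (2+γ)) :=
                  mul_le_mul_of_nonneg_left (hbd j _ hkl) (by positivity)
          rw [Real.norm_of_nonneg (mul_nonneg (hp0 l) (mul_nonneg (by positivity) (hq0 _ _)))]
          exact mul_le_mul_of_nonneg_left hq (hp0 l)
        · rw [if_neg h]
          simp only [norm_zero]
          exact mul_nonneg (hp0 l) (by positivity)
      have hsumm : Summable (fun l => p l * ((2:ℝ) ^ e * (C * (j : ℝ) ^ (2+γ)))) :=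
        hps.summable.mul_right _
      have := tendsto_tsum_of_dominated_convergence hsumm hlim hbound
      convert this using 2
      rw [tsum_mul_right, hps.tsum_eq, one_mul]
    have hS2 : Tendsto (fun k => ∑' s, f2 k s) atTop (nhds c) := by
      have hlim : ∀ s : ℕ, Tendsto (fun k => f2 k s) atTop (nhds (q j s * c)) := by
        intro s
        have hsh := tendsto_rpow_mul_shift hγ htail s
        have : Tendsto (fun k : ℕ => q j s * ((k : ℝ) ^ e * p (k - s))) atTop
            (nhds (q j s * c)) := (hsh.const_mul (q j s))
        refine Tendsto.congr' ?_ this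
        filter_upwards [eventually_ge_atTop (2*s+1)] with k hk
        simp only [hf2]
        rw [if_pos (by omega)]
      have hbound : ∀ᶠ k : ℕ in atTop, ∀ s, ‖f2 k s‖ ≤ q j s * ((2:ℝ) ^ e * C) := by
        filter_upwards [eventually_ge_atTop 1] with k hk
        intro s
        simp only [hf2]
        by_cases h : 2*s < k
        · rw [if_pos h]
          have hks : 1 ≤ k - s := by omega
          have hk2 : (k : ℝ) ≤ 2 * ((k - s : ℕ) : ℝ) := by
            have : k ≤ 2 * (k - s) := by omega
            exact_mod_cast this
          have hr : (k : ℝ) ^ e ≤ (2:ℝ) ^ e * ((k - s : ℕ) : ℝ) ^ e := by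
            rw [← Real.mul_rpow h2e.le (Nat.cast_nonneg _)]
            exact Real.rpow_le_rpow (Nat.cast_nonneg _) hk2 (by rw [he]; linarith)
          have hq : (k : ℝ) ^ e * p (k - s) ≤ (2:ℝ) ^ e * C := by
            calc (k : ℝ) ^ e * p (k - s)
                ≤ (2:ℝ) ^ e * ((k - s : ℕ) : ℝ) ^ e * p (k - s) :=
                  mul_le_mul_of_nonneg_right hr (hp0 _)
              _ = (2:ℝ) ^ e * (((k - s : ℕ) : ℝ) ^ e * p (k - s)) := by ring
              _ ≤ (2:ℝ) ^ e * C := mul_le_mul_of_nonneg_left (hpC _) (by positivity)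
          rw [Real.norm_of_nonneg (mul_nonneg (hq0 _ _) (mul_nonneg (by positivity) (hp0 _)))]
          exact mul_le_mul_of_nonneg_left hq (hq0 _ _)
        · rw [if_neg h]
          simp only [norm_zero]
          exact mul_nonneg (hq0 _ _) (by positivity)
      have hsumm : Summable (fun s => q j s * ((2:ℝ) ^ e * C)) :=
        (hqs j).summable.mul_right _
      have := tendsto_tsum_of_dominated_convergence hsumm hlim hbound
      convert this using 2
      rw [tsum_mul_right, (hqs j).tsum_eq, one_mul]
    have := hS1.add hS2
    have heq : ((j + 1 : ℕ) : ℝ) * c = (j : ℝ) * c + c := by push_cast; ring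
    rw [heq]
    exact Tendsto.congr (fun k => (hdecomp k).symm) this

lemma hasSum_poisson_mean {m : ℝ} (hm : 0 < m) :
    HasSum (fun j : ℕ => Real.exp (-m) * m ^ j / (Nat.factorial j) * (j : ℝ)) m := by
  have h1 : HasSum (fun n : ℕ => m ^ n / (Nat.factorial n)) (Real.exp m) := by
    rw [Real.exp_eq_exp_ℝ]
    exact NormedSpace.expSeries_div_hasSum_exp m
  have h2 := h1.mul_left (Real.exp (-m) * m)
  set f : ℕ → ℝ := fun j => Real.exp (-m) * m ^ j / (Nat.factorial j) * (j : ℝ) with hf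
  have hfun : (fun n : ℕ => f (n + 1))
      = fun n : ℕ => Real.exp (-m) * m * (m ^ n / (Nat.factorial n)) := by
    funext n
    simp only [hf]
    rw [Nat.factorial_succ]
    have hfac : ((Nat.factorial n : ℝ)) ≠ 0 := by
      exact_mod_cast Nat.factorial_ne_zero n
    have hn1 : ((n : ℝ) + 1) ≠ 0 := by positivity
    push_cast
    field_simp
    ring
  have h3 : HasSum (fun n : ℕ => f (n + 1)) (Real.exp (-m) * m * Real.exp m) := by
    rw [hfun]; exact h2
  have h4 : HasSum f (Real.exp (-m) * m * Real.exp m + ∑ i ∈ Finset.range 1, f i) :=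
    (hasSum_nat_add_iff 1).mp h3
  have hval : Real.exp (-m) * m * Real.exp m + ∑ i ∈ Finset.range 1, f i = m := by
    rw [Finset.sum_range_one]
    simp only [hf]
    rw [Real.exp_neg]
    have := Real.exp_pos m
    field_simp
    simp
  rwa [hval] at h4

lemma summable_poisson_bound (m C γ : ℝ) (hm : 0 < m) (hC : 0 ≤ C) (hγ : 0 < γ) :
    Summable (fun j : ℕ =>
      Real.exp (-m) * m ^ j / (Nat.factorial j) * (C * (j : ℝ) ^ (2 + γ))) := by
  have key : ∀ j : ℕ, Real.exp (-m) * m ^ j / (Nat.factorial j) * (C * (j : ℝ) ^ (2 + γ))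
      ≤ (Real.exp (-m) * C) * ((m * Real.exp (2 + γ)) ^ j / (Nat.factorial j)) := by
    intro j
    have hj : (j : ℝ) ^ (2 + γ) ≤ Real.exp (2 + γ) ^ j := by
      rcases Nat.eq_zero_or_pos j with rfl | hj1
      · simp only [Nat.cast_zero]
        rw [Real.zero_rpow (by linarith)]
        positivity
      · have h1 : (j : ℝ) ≤ Real.exp j := by
          have := Real.add_one_le_exp (j : ℝ)
          linarith
        calc (j : ℝ) ^ (2 + γ) ≤ (Real.exp j) ^ (2 + γ) :=
              Real.rpow_le_rpow (Nat.cast_nonneg j) h1 (by linarith)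
          _ = Real.exp ((j : ℝ) * (2 + γ)) := (Real.exp_mul _ _).symm
          _ = Real.exp (2 + γ) ^ j := Real.exp_nat_mul _ j
    have hfac : (0 : ℝ) < (Nat.factorial j : ℝ) := by
      exact_mod_cast Nat.factorial_pos j
    rw [mul_pow]
    have h2 : m ^ j * (j : ℝ) ^ (2 + γ) ≤ m ^ j * Real.exp (2 + γ) ^ j :=
      mul_le_mul_of_nonneg_left hj (by positivity)
    calc Real.exp (-m) * m ^ j / (Nat.factorial j) * (C * (j : ℝ) ^ (2 + γ))
        = (Real.exp (-m) * C / (Nat.factorial j)) * (m ^ j * (j : ℝ) ^ (2 + γ)) := by ring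
      _ ≤ (Real.exp (-m) * C / (Nat.factorial j)) * (m ^ j * Real.exp (2 + γ) ^ j) := by
          refine mul_le_mul_of_nonneg_left h2 ?_
          positivity
      _ = (Real.exp (-m) * C) * (m ^ j * Real.exp (2 + γ) ^ j / (Nat.factorial j)) := by ring
  refine Summable.of_nonneg_of_le ?_ key ?_
  · intro j
    have : (0:ℝ) ≤ (j : ℝ) ^ (2 + γ) := by positivity
    have h1 : (0:ℝ) ≤ Real.exp (-m) * m ^ j / (Nat.factorial j) := by positivity
    exact mul_nonneg h1 (mul_nonneg hC this)
  · have := (Real.summable_pow_div_factorial (m * Real.exp (2 + γ))).mul_left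
      (Real.exp (-m) * C)
    convert this using 2 with j

/-- Power-law tail of a compound Poisson sum: if the i.i.d. ℤ≥0-valued `Y i` satisfy
`k^{1+γ} P(Y = k) → c` and `K ~ Poisson(m)` is independent of the `Y i`, then the
compound Poisson variable `B* = Σ_{i<K} Y i` satisfies `k^{1+γ} P(B* = k) → m c`. -/
theorem stmt_11 {Ω : Type*} [MeasurableSpace Ω] (P : Measure Ω) [IsProbabilityMeasure P]
    (m c γ : ℝ) (hm : 0 < m) (hc : 0 < c) (hγ : 0 < γ)
    (K : Ω → ℕ) (Y : ℕ → Ω → ℕ)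
    (hKm : Measurable K) (hYm : ∀ i, Measurable (Y i))
    (hK : ∀ k : ℕ, (P {ω | K ω = k}).toReal
      = Real.exp (-m) * m ^ k / (Nat.factorial k))
    (hYid : ∀ i, Measure.map (Y i) P = Measure.map (Y 0) P)
    (hIndep : iIndepFun
      (fun (o : Option ℕ) => o.elim K Y) P)
    (htail : Tendsto (fun k : ℕ => (k : ℝ) ^ (1 + γ) * (P {ω | Y 0 ω = k}).toReal)
      atTop (nhds c)) :
    Tendsto (fun k : ℕ =>
        (k : ℝ) ^ (1 + γ) * (P {ω | (∑ i ∈ Finset.range (K ω), Y i ω) = k}).toReal)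
      atTop (nhds (m * c)) := by
  classical
  have hSm : ∀ j, Measurable (fun ω => ∑ i ∈ Finset.range j, Y i ω) :=
    fun j => Finset.measurable_sum _ (fun i _ => hYm i)
  -- basic facts about the point probabilities
  have hp0 : ∀ k : ℕ, 0 ≤ (P {ω | Y 0 ω = k}).toReal := fun k => ENNReal.toReal_nonneg
  have hq0 : ∀ j k : ℕ, 0 ≤ (P {ω | (∑ i ∈ Finset.range j, Y i ω) = k}).toReal :=
    fun j k => ENNReal.toReal_nonneg
  have hps : HasSum (fun k => (P {ω | Y 0 ω = k}).toReal) 1 := hasSum_prob P (Y 0) (hYm 0)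
  have hqs : ∀ j, HasSum (fun k => (P {ω | (∑ i ∈ Finset.range j, Y i ω) = k}).toReal) 1 :=
    fun j => hasSum_prob P _ (hSm j)
  have hqz : ∀ k : ℕ, 1 ≤ k → (P {ω | (∑ i ∈ Finset.range 0, Y i ω) = k}).toReal = 0 := by
    intro k hk
    have hempty : {ω : Ω | (∑ i ∈ Finset.range 0, Y i ω) = k} = ∅ := by
      ext ω
      simp only [Finset.range_zero, Finset.sum_empty, Set.mem_setOf_eq,
        Set.mem_empty_iff_false, iff_false]
      omega
    rw [hempty, measure_empty, ENNReal.toReal_zero]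
  -- the uniform bound on the tail
  obtain ⟨C, hCmem⟩ := htail.bddAbove_range
  have hpC : ∀ k : ℕ, (k : ℝ) ^ (1 + γ) * (P {ω | Y 0 ω = k}).toReal ≤ C :=
    fun k => hCmem (Set.mem_range_self k)
  have hC0 : 0 ≤ C := by
    have h0 : (0 : ℝ) = ((0 : ℕ) : ℝ) ^ (1 + γ) * (P {ω | Y 0 ω = 0}).toReal := by
      rw [Nat.cast_zero, Real.zero_rpow (by linarith), zero_mul]
    exact h0 ▸ hpC 0
  -- independence facts
  have hfm : ∀ o : Option ℕ, Measurable ((fun o : Option ℕ => o.elim K Y) o) := by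
    rintro (_|i)
    · exact hKm
    · exact hYm i
  have hIndepSY : ∀ j, IndepFun (fun ω => ∑ i ∈ Finset.range j, Y i ω) (Y j) P := by
    intro j
    have hd : Disjoint ((Finset.range j).image some) ({some j} : Finset (Option ℕ)) := by
      simp only [Finset.disjoint_left, Finset.mem_image, Finset.mem_singleton]
      rintro a ⟨i, hi, rfl⟩ h
      rw [Option.some_inj] at h
      subst h
      exact absurd hi (by simp)
    have h1 := hIndep.indepFun_finset ((Finset.range j).image some) {some j} hd hfm
    have hφ : Measurable (fun v : (((Finset.range j).image some : Finset (Option ℕ)) → ℕ) =>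
        ∑ i ∈ Finset.attach ((Finset.range j).image some), v i) :=
      Finset.measurable_sum _ (fun i _ => measurable_pi_apply i)
    have hψ : Measurable (fun v : (({some j} : Finset (Option ℕ)) → ℕ) =>
        v ⟨some j, Finset.mem_singleton_self _⟩) := measurable_pi_apply _
    have h2 := h1.comp hφ hψ
    convert h2 using 1
    · funext ω
      show ∑ i ∈ Finset.range j, Y i ω
        = ∑ i ∈ Finset.attach ((Finset.range j).image some), (fun o : Option ℕ => o.elim K Y) i ω
      rw [Finset.sum_attach ((Finset.range j).image some)
        (fun o => (fun o : Option ℕ => o.elim K Y) o ω)]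
      rw [Finset.sum_image (by intro x _ y _ h; exact Option.some_inj.mp h)]
      rfl
    · rfl
  have hIndepSK : ∀ j, IndepFun (fun ω => ∑ i ∈ Finset.range j, Y i ω) K P := by
    intro j
    have hd : Disjoint ((Finset.range j).image some) ({none} : Finset (Option ℕ)) := by
      simp only [Finset.disjoint_left, Finset.mem_image, Finset.mem_singleton]
      rintro a ⟨i, hi, rfl⟩ h
      exact Option.some_ne_none i h
    have h1 := hIndep.indepFun_finset ((Finset.range j).image some) {none} hd hfm
    have hφ : Measurable (fun v : (((Finset.range j).image some : Finset (Option ℕ)) → ℕ) =>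
        ∑ i ∈ Finset.attach ((Finset.range j).image some), v i) :=
      Finset.measurable_sum _ (fun i _ => measurable_pi_apply i)
    have hψ : Measurable (fun v : (({none} : Finset (Option ℕ)) → ℕ) =>
        v ⟨none, Finset.mem_singleton_self _⟩) := measurable_pi_apply _
    have h2 := h1.comp hφ hψ
    convert h2 using 1
    · funext ω
      show ∑ i ∈ Finset.range j, Y i ω
        = ∑ i ∈ Finset.attach ((Finset.range j).image some), (fun o : Option ℕ => o.elim K Y) i ω
      rw [Finset.sum_attach ((Finset.range j).image some)
        (fun o => (fun o : Option ℕ => o.elim K Y) o ω)]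
      rw [Finset.sum_image (by intro x _ y _ h; exact Option.some_inj.mp h)]
      rfl
    · rfl
  -- identical distribution
  have hYd : ∀ j l : ℕ, P {ω | Y j ω = l} = P {ω | Y 0 ω = l} := by
    intro j l
    have h1 : P {ω | Y j ω = l} = (Measure.map (Y j) P) {l} := by
      rw [Measure.map_apply (hYm j) (measurableSet_singleton l)]
      rfl
    have h2 : P {ω | Y 0 ω = l} = (Measure.map (Y 0) P) {l} := by
      rw [Measure.map_apply (hYm 0) (measurableSet_singleton l)]
      rfl
    rw [h1, h2, hYid j]
  -- convolution recursion
  have hrec : ∀ j k : ℕ, (P {ω | (∑ i ∈ Finset.range (j+1), Y i ω) = k}).toReal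
      = ∑ l ∈ Finset.range (k+1),
          (P {ω | (∑ i ∈ Finset.range j, Y i ω) = k - l}).toReal
            * (P {ω | Y 0 ω = l}).toReal := by
    intro j k
    have hev : {ω : Ω | (∑ i ∈ Finset.range (j+1), Y i ω) = k}
        = ⋃ l ∈ Finset.range (k+1),
          ({ω | (∑ i ∈ Finset.range j, Y i ω) = k - l} ∩ {ω | Y j ω = l}) := by
      ext ω
      simp only [Set.mem_setOf_eq, Finset.sum_range_succ, Set.mem_iUnion,
        Set.mem_inter_iff, Finset.mem_range, exists_prop]
      constructor
      · intro h
        exact ⟨Y j ω, by omega, by omega, rfl⟩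
      · rintro ⟨l, hl, h1, h2⟩
        omega
    have hmeasl : ∀ l : ℕ, MeasurableSet
        ({ω : Ω | (∑ i ∈ Finset.range j, Y i ω) = k - l} ∩ {ω | Y j ω = l}) :=
      fun l => ((hSm j) (measurableSet_singleton _)).inter ((hYm j) (measurableSet_singleton _))
    have hdisj : (↑(Finset.range (k+1)) : Set ℕ).PairwiseDisjoint
        (fun l => ({ω : Ω | (∑ i ∈ Finset.range j, Y i ω) = k - l} ∩ {ω | Y j ω = l})) := by
      intro a _ b _ hab
      refine Set.disjoint_left.mpr ?_
      rintro ω ⟨-, h1⟩ ⟨-, h2⟩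
      exact hab (h1.symm.trans h2)
    have hprod : ∀ l : ℕ,
        P ({ω | (∑ i ∈ Finset.range j, Y i ω) = k - l} ∩ {ω | Y j ω = l})
          = P {ω | (∑ i ∈ Finset.range j, Y i ω) = k - l} * P {ω | Y 0 ω = l} := by
      intro l
      have h1 := (indepFun_iff_measure_inter_preimage_eq_mul.mp (hIndepSY j)) {k - l} {l}
        (measurableSet_singleton _) (measurableSet_singleton _)
      rw [← hYd j l]
      exact h1
    rw [hev, measure_biUnion_finset hdisj (fun l _ => hmeasl l),
      ENNReal.toReal_sum (fun l _ => measure_ne_top P _)]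
    refine Finset.sum_congr rfl (fun l _ => ?_)
    rw [hprod l, ENNReal.toReal_mul]
  -- decomposition over the value of K
  have hPB : ∀ k : ℕ, (P {ω | (∑ i ∈ Finset.range (K ω), Y i ω) = k}).toReal
      = ∑' j : ℕ, (P {ω | K ω = j}).toReal
          * (P {ω | (∑ i ∈ Finset.range j, Y i ω) = k}).toReal := by
    intro k
    have hev : {ω : Ω | (∑ i ∈ Finset.range (K ω), Y i ω) = k}
        = ⋃ j : ℕ, ({ω | K ω = j} ∩ {ω | (∑ i ∈ Finset.range j, Y i ω) = k}) := by
      ext ω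
      simp only [Set.mem_setOf_eq, Set.mem_iUnion, Set.mem_inter_iff]
      constructor
      · intro h
        exact ⟨K ω, rfl, h⟩
      · rintro ⟨j, h1, h2⟩
        rw [← h1] at h2
        exact h2
    have hmeasj : ∀ j : ℕ, MeasurableSet
        ({ω : Ω | K ω = j} ∩ {ω | (∑ i ∈ Finset.range j, Y i ω) = k}) :=
      fun j => (hKm (measurableSet_singleton _)).inter ((hSm j) (measurableSet_singleton _))
    have hdisj : Pairwise (Function.onFun Disjoint
        (fun j => ({ω : Ω | K ω = j} ∩ {ω | (∑ i ∈ Finset.range j, Y i ω) = k}))) := by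
      intro a b hab
      refine Set.disjoint_left.mpr ?_
      rintro ω ⟨h1, -⟩ ⟨h2, -⟩
      exact hab (h1.symm.trans h2)
    have hprod : ∀ j : ℕ,
        P ({ω | K ω = j} ∩ {ω | (∑ i ∈ Finset.range j, Y i ω) = k})
          = P {ω | K ω = j} * P {ω | (∑ i ∈ Finset.range j, Y i ω) = k} := by
      intro j
      have h1 := (indepFun_iff_measure_inter_preimage_eq_mul.mp (hIndepSK j)) {k} {j}
        (measurableSet_singleton _) (measurableSet_singleton _)
      rw [Set.inter_comm, mul_comm]
      exact h1
    rw [hev, measure_iUnion hdisj hmeasj,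
      ENNReal.tsum_toReal_eq (fun j => measure_ne_top P _)]
    refine tsum_congr (fun j => ?_)
    rw [hprod j, ENNReal.toReal_mul]
  -- the analytic limits
  have hconv := conv_tendsto hγ hC0 hp0 hps hq0 hqs hqz hrec hpC htail
  have hbd := conv_bound hγ hC0 hp0 hps hq0 hqs hqz hrec hpC
  have hw0 : ∀ j : ℕ, 0 ≤ Real.exp (-m) * m ^ j / (Nat.factorial j) := by
    intro j; positivity
  have hsummW : Summable (fun j : ℕ =>
      Real.exp (-m) * m ^ j / (Nat.factorial j) * (C * (j : ℝ) ^ (2 + γ))) :=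
    summable_poisson_bound m C γ hm hC0 hγ
  have hlimj : ∀ j : ℕ, Tendsto (fun k : ℕ => Real.exp (-m) * m ^ j / (Nat.factorial j)
      * ((k : ℝ) ^ (1 + γ) * (P {ω | (∑ i ∈ Finset.range j, Y i ω) = k}).toReal)) atTop
      (nhds (Real.exp (-m) * m ^ j / (Nat.factorial j) * ((j : ℝ) * c))) :=
    fun j => (hconv j).const_mul _
  have hbound : ∀ᶠ k : ℕ in atTop, ∀ j : ℕ,
      ‖Real.exp (-m) * m ^ j / (Nat.factorial j)
        * ((k : ℝ) ^ (1 + γ) * (P {ω | (∑ i ∈ Finset.range j, Y i ω) = k}).toReal)‖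
        ≤ Real.exp (-m) * m ^ j / (Nat.factorial j) * (C * (j : ℝ) ^ (2 + γ)) := by
    filter_upwards [eventually_ge_atTop 1] with k hk
    intro j
    rw [Real.norm_of_nonneg (mul_nonneg (hw0 j) (mul_nonneg (by positivity) (hq0 j k)))]
    exact mul_le_mul_of_nonneg_left (hbd j k hk) (hw0 j)
  have hDCT := tendsto_tsum_of_dominated_convergence hsummW hlimj hbound
  -- identify the limit value
  have hval : (∑' j : ℕ, Real.exp (-m) * m ^ j / (Nat.factorial j) * ((j : ℝ) * c))
      = m * c := by
    have h1 := (hasSum_poisson_mean hm).mul_right c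
    rw [← h1.tsum_eq]
    refine tsum_congr (fun j => ?_)
    ring
  rw [hval] at hDCT
  -- identify the function
  refine Tendsto.congr (fun k => ?_) hDCT
  rw [hPB k, ← tsum_mul_left]
  refine tsum_congr (fun j => ?_)
  rw [hK j]
  ring
end

section
/- For the pure-birth two-type model with α_A + ν = α_B (neutral mutation), β_A = β_B = 0, and one initial wildtype cell, the number of mutants at total population size n satisfies P(B(σ_n) = k) = Σ_{i=1}^{n-k} (-1)^{n-i} C(n-k-1, i-1) · C(i·α_A/α_B - 1, n-1), where C(x, m) is the generalized binomial coefficient. -/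
/-- Generalized binomial coefficient `C(x, m) = x(x-1)⋯(x-m+1)/m!` for real `x`. -/
noncomputable def genChoose (x : ℝ) (m : ℕ) : ℝ :=
  (∏ j ∈ Finset.range m, (x - j)) / (Nat.factorial m : ℝ)

/-- Marginal law of the embedded jump chain of the pure-birth two-type model:
`twoTypeLaw p m (i, j)` is the probability that, started from `(1,0)`, after `m` steps the
chain is in state `(i, j)`, where from `(i, j)` the next state is `(i+1, j)` with
probability `i p/(i+j)` and `(i, j+1)` with probability `1 - i p/(i+j)`. -/
noncomputable def twoTypeLaw (p : ℝ) : ℕ → ℕ × ℕ → ℝ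
  | 0 => fun s => if s = (1, 0) then 1 else 0
  | m + 1 => fun s =>
      (if 2 ≤ s.1 then
        twoTypeLaw p m (s.1 - 1, s.2) *
          (((s.1 : ℝ) - 1) * p / (((s.1 : ℝ) - 1) + s.2))
      else 0) +
      (if 1 ≤ s.2 then
        twoTypeLaw p m (s.1, s.2 - 1) *
          (1 - (s.1 : ℝ) * p / ((s.1 : ℝ) + s.2 - 1))
      else 0)

open Finset Polynomial

noncomputable def S (p : ℝ) (m i : ℕ) : ℝ :=
  ∑ j ∈ Finset.Icc 1 i,
    (-1 : ℝ) ^ (m + 1 + j) * ((i - 1).choose (j - 1)) * genChoose ((j : ℝ) * p - 1) m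

lemma genChoose_succ (x : ℝ) (m : ℕ) :
    genChoose x (m + 1) = genChoose x m * (x - m) / (m + 1) := by
  have h1 : (m.factorial : ℝ) ≠ 0 := Nat.cast_ne_zero.mpr m.factorial_ne_zero
  have h2 : ((m : ℝ) + 1) ≠ 0 := by positivity
  unfold genChoose
  rw [Finset.prod_range_succ, Nat.factorial_succ]
  push_cast
  rw [div_mul_eq_mul_div, div_div, mul_comm (m.factorial : ℝ) ((m : ℝ) + 1)]

lemma natDegree_comp_X_add_one (P : ℝ[X]) (h : 0 < P.natDegree) :
    (P.comp (X + C 1) - P).natDegree < P.natDegree := by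
  have hP0 : P ≠ 0 := fun h0 => by simp [h0] at h
  have hq : (X + C (1:ℝ)).natDegree = 1 := natDegree_X_add_C 1
  have hlc : (P.comp (X + C 1)).leadingCoeff = P.leadingCoeff := by
    rw [leadingCoeff_comp (by rw [hq]; norm_num)]
    rw [(monic_X_add_C (1:ℝ)).leadingCoeff, one_pow, mul_one]
  have hc0 : P.comp (X + C 1) ≠ 0 := by
    intro h0
    apply hP0
    rw [← leadingCoeff_eq_zero] at *
    rw [← hlc, h0]
  have hnd : (P.comp (X + C 1)).natDegree = P.natDegree := by
    rw [natDegree_comp, hq, mul_one]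
  have hdeg : (P.comp (X + C 1)).degree = P.degree := by
    rw [degree_eq_natDegree hc0, degree_eq_natDegree hP0, hnd]
  have hlt : (P.comp (X + C 1) - P).degree < P.degree := by
    have := degree_sub_lt hdeg hc0 hlc
    rwa [hdeg] at this
  rcases eq_or_ne (P.comp (X + C 1) - P) 0 with h0 | h0
  · rw [h0]; simpa using h
  · exact natDegree_lt_natDegree h0 hlt

lemma fwdDiff_polyeval (P : ℝ[X]) :
    fwdDiff 1 (fun l : ℕ => P.eval (l : ℝ)) =
      fun l : ℕ => (P.comp (X + C 1) - P).eval (l : ℝ) := by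
  funext l
  simp only [fwdDiff, eval_comp, eval_sub, eval_add, eval_X, eval_C]
  push_cast
  ring

lemma fwdDiff_iter_polyeval_eq_zero :
    ∀ (N : ℕ) (P : ℝ[X]), P.natDegree < N →
      (fwdDiff 1)^[N] (fun l : ℕ => P.eval (l : ℝ)) = 0 := by
  intro N
  induction N with
  | zero => intro P h; exact absurd h (Nat.not_lt_zero _)
  | succ N IH =>
    intro P h
    rw [Function.iterate_succ_apply, fwdDiff_polyeval]
    rcases Nat.eq_zero_or_pos P.natDegree with h0 | h0
    · obtain ⟨a, ha⟩ := Polynomial.natDegree_eq_zero.mp h0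
      have : P.comp (X + C 1) - P = 0 := by rw [← ha]; simp
      rw [this]
      have hz : (fun l : ℕ => (0:ℝ[X]).eval (l:ℝ)) = (0 : ℕ → ℝ) := by
        funext l; simp
      rw [hz]
      apply Function.iterate_fixed
      funext x; simp [fwdDiff]
    · exact IH _ (lt_of_lt_of_le (natDegree_comp_X_add_one P h0) (by omega))

lemma sum_shift_polyeval_eq_zero (N : ℕ) (P : ℝ[X]) (h : P.natDegree < N) :
    ∑ l ∈ Finset.range (N + 1),
      (-1 : ℝ) ^ (N - l) * (N.choose l) * P.eval (l : ℝ) = 0 := by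
  have h0 := fwdDiff_iter_eq_sum_shift (M := ℕ) (G := ℝ) 1 (fun l : ℕ => P.eval (l : ℝ)) N 0
  rw [fwdDiff_iter_polyeval_eq_zero N P h] at h0
  simp only [Pi.zero_apply, smul_eq_mul, mul_one, zero_add, zsmul_eq_mul] at h0
  push_cast at h0
  rw [← h0]

lemma S_vanish (p : ℝ) (m : ℕ) : S p m (m + 2) = 0 := by
  set P : ℝ[X] := ∏ t ∈ Finset.range m, (C p * X + C (p - 1 - (t : ℝ))) with hP
  have hdeg : P.natDegree < m + 1 := by
    have h1 : P.natDegree ≤ ∑ t ∈ Finset.range m, (C p * X + C (p - 1 - (t : ℝ))).natDegree :=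
      Polynomial.natDegree_prod_le _ _
    have h2 : ∑ t ∈ Finset.range m, (C p * X + C (p - 1 - (t : ℝ))).natDegree ≤ m := by
      refine le_trans (Finset.sum_le_sum (g := fun _ => 1) ?_) (by simp)
      intro t _
      exact Polynomial.natDegree_linear_le
    omega
  have heval : ∀ l : ℕ, genChoose (((l : ℝ) + 1) * p - 1) m = P.eval (l : ℝ) / m.factorial := by
    intro l
    unfold genChoose
    rw [hP, Polynomial.eval_prod]
    congr 1
    apply Finset.prod_congr rfl
    intro t _
    simp only [Polynomial.eval_add, Polynomial.eval_mul, Polynomial.eval_C, Polynomial.eval_X]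
    ring
  have key := sum_shift_polyeval_eq_zero (m + 1) P hdeg
  unfold S
  rw [← Finset.Ico_add_one_right_eq_Icc, Finset.sum_Ico_eq_sum_range]
  simp only [Nat.succ_sub_one, Nat.add_sub_cancel]
  have : ∀ l ∈ Finset.range (m + 2),
      (-1 : ℝ) ^ (m + 1 + (1 + l)) * ((m + 1).choose (1 + l - 1)) *
        genChoose (((1 + l : ℕ) : ℝ) * p - 1) m
      = (-(1 : ℝ) / m.factorial) *
          ((-1 : ℝ) ^ (m + 1 - l) * ((m + 1).choose l) * P.eval (l : ℝ)) := by
    intro l hl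
    rw [Finset.mem_range] at hl
    have h2 : 1 + l - 1 = l := by omega
    have h3 : ((1 + l : ℕ) : ℝ) * p - 1 = ((l : ℝ) + 1) * p - 1 := by push_cast; ring
    rw [h2, h3, heval l]
    have hsign : (-1 : ℝ) ^ (m + 1 + (1 + l)) = -(-1 : ℝ) ^ (m + 1 - l) := by
      rw [show m + 1 + (1 + l) = (m + 1 - l) + (2 * l + 1) from by omega, pow_add, pow_add,
        pow_mul, neg_one_sq, one_pow, pow_one, one_mul, mul_neg, mul_one]
    rw [hsign]
    ring
  rw [Finset.sum_congr rfl this, ← Finset.mul_sum, key, mul_zero]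

-- key step identity
lemma S_step (p : ℝ) (m i : ℕ) (hi : 2 ≤ i) :
    S p (m + 1) i
      = S p m (i - 1) * (((i : ℝ) - 1) * p / (m + 1))
        + S p m i * (1 - (i : ℝ) * p / ((m : ℝ) + 1)) := by
  obtain ⟨a, rfl⟩ : ∃ a, i = a + 2 := ⟨i - 2, by omega⟩
  have hM : ((m : ℝ) + 1) ≠ 0 := by positivity
  unfold S
  simp only [Nat.succ_sub_one]
  have hext : (∑ j ∈ Finset.Icc 1 (a + 1),
        (-1 : ℝ) ^ (m + 1 + j) * (a.choose (j - 1)) * genChoose ((j : ℝ) * p - 1) m)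
      = ∑ j ∈ Finset.Icc 1 (a + 2),
          (-1 : ℝ) ^ (m + 1 + j) * (a.choose (j - 1)) * genChoose ((j : ℝ) * p - 1) m := by
    rw [Finset.sum_Icc_succ_top (by omega : 1 ≤ a + 2)]
    simp only [Nat.succ_sub_one]
    rw [Nat.choose_eq_zero_of_lt (show a < a + 1 from by omega)]
    push_cast
    ring
  rw [hext, Finset.sum_mul, Finset.sum_mul, ← Finset.sum_add_distrib]
  apply Finset.sum_congr rfl
  intro j hj
  rw [Finset.mem_Icc] at hj
  obtain ⟨hj1, hj2⟩ := hj
  rw [genChoose_succ]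
  have hnat : a.choose (j - 1) * (a + 1) = (a + 1).choose (j - 1) * (a + 2 - j) := by
    have h := Nat.choose_mul_succ_eq a (j - 1)
    rw [show a + 1 - (j - 1) = a + 2 - j from by omega] at h
    exact h
  have key : (a.choose (j - 1) : ℝ) * ((a : ℝ) + 1)
      = ((a + 1).choose (j - 1) : ℝ) * ((a : ℝ) + 2 - (j : ℝ)) := by
    have := congrArg (Nat.cast : ℕ → ℝ) hnat
    push_cast [Nat.cast_sub (show j ≤ a + 2 from hj2)] at this
    exact this
  rw [show m + 1 + 1 + j = (m + 1 + j) + 1 from by omega, pow_succ]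
  field_simp
  push_cast
  linear_combination
    (-(genChoose ((j : ℝ) * p - 1) m * p)) * key

lemma twoTypeLaw_succ (p : ℝ) (m i : ℕ) (h1 : 1 ≤ i) (h2 : i ≤ m + 2) :
    twoTypeLaw p (m + 1) (i, m + 2 - i) =
      (if 2 ≤ i then twoTypeLaw p m (i - 1, m + 2 - i) * (((i : ℝ) - 1) * p / (m + 1)) else 0)
      + (if i ≤ m + 1 then twoTypeLaw p m (i, m + 1 - i) * (1 - (i : ℝ) * p / ((m : ℝ) + 1)) else 0) := by
  have hc : ((m + 2 - i : ℕ) : ℝ) = (m : ℝ) + 2 - (i : ℝ) := by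
    push_cast [Nat.cast_sub h2]; ring
  show (if 2 ≤ i then
        twoTypeLaw p m (i - 1, m + 2 - i) *
          (((i : ℝ) - 1) * p / (((i : ℝ) - 1) + ((m + 2 - i : ℕ) : ℝ)))
      else 0) +
      (if 1 ≤ m + 2 - i then
        twoTypeLaw p m (i, m + 2 - i - 1) *
          (1 - (i : ℝ) * p / ((i : ℝ) + ((m + 2 - i : ℕ) : ℝ) - 1))
      else 0) = _
  have hd1 : ((i : ℝ) - 1) + ((m + 2 - i : ℕ) : ℝ) = (m : ℝ) + 1 := by rw [hc]; ring
  have hd2 : (i : ℝ) + ((m + 2 - i : ℕ) : ℝ) - 1 = (m : ℝ) + 1 := by rw [hc]; ring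
  have hg : (1 ≤ m + 2 - i) ↔ (i ≤ m + 1) := by omega
  rw [hd1, hd2, show m + 2 - i - 1 = m + 1 - i from by omega]
  simp only [hg]

lemma main_lemma (p : ℝ) :
    ∀ m i, 1 ≤ i → i ≤ m + 1 → twoTypeLaw p m (i, m + 1 - i) = S p m i := by
  intro m
  induction m with
  | zero =>
    intro i h1 h2
    have : i = 1 := by omega
    subst this
    show twoTypeLaw p 0 (1, 0) = _
    rw [twoTypeLaw]
    unfold S
    rw [Finset.Icc_self, Finset.sum_singleton]
    simp [genChoose]
  | succ m IH =>
    intro i h1 h2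
    rw [show m + 1 + 1 - i = m + 2 - i from rfl, twoTypeLaw_succ p m i h1 h2]
    rcases (show i = 1 ∨ (2 ≤ i ∧ i ≤ m + 1) ∨ i = m + 2 from by omega) with hi | ⟨hi, hi'⟩ | hi
    · subst hi
      rw [if_neg (by omega), if_pos (by omega)]
      simp only [Nat.succ_sub_one]
      have hI : twoTypeLaw p m (1, m) = S p m 1 := IH 1 le_rfl (by omega)
      rw [hI]
      unfold S
      rw [Finset.Icc_self, Finset.sum_singleton, Finset.sum_singleton]
      rw [genChoose_succ]
      have hM : ((m : ℝ) + 1) ≠ 0 := by positivity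
      rw [show m + 1 + 1 + 1 = (m + 1 + 1) + 1 from rfl, pow_succ]
      push_cast
      field_simp
      ring
    · rw [if_pos hi, if_pos hi', show m + 2 - i = m + 1 - (i - 1) from by omega,
        IH (i - 1) (by omega) (by omega), IH i h1 hi', S_step p m i hi]
    · subst hi
      rw [if_pos (by omega), if_neg (by omega)]
      simp only [Nat.succ_sub_one, Nat.sub_self]
      have hI : twoTypeLaw p m (m + 1, 0) = S p m (m + 1) := by
        have := IH (m + 1) (by omega) le_rfl
        simpa using this
      rw [hI, S_step p m (m + 2) (by omega), S_vanish p m]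
      simp only [Nat.succ_sub_one]
      push_cast
      ring

/-- Angerer's formula: in the pure-birth two-type model with `α_B = α_A + ν` (neutral
mutation), no deaths, and one initial wildtype cell, the number of mutants at total
population size `n` satisfies
`P(B(σ_n) = k) = Σ_{i=1}^{n-k} (-1)^{n-i} C(n-k-1, i-1) C(i α_A/α_B - 1, n-1)`. -/
theorem stmt_17 (αA ν αB : ℝ) (hα : 0 < αA) (hν : 0 < ν) (hB : αB = αA + ν)
    (n k : ℕ) (hn : 1 ≤ n) (hk : k ≤ n - 1) :
    twoTypeLaw (αA / αB) (n - 1) (n - k, k)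
      = ∑ i ∈ Finset.Icc 1 (n - k),
          (-1 : ℝ) ^ (n - i) * ((n - k - 1).choose (i - 1)) *
            genChoose ((i : ℝ) * αA / αB - 1) (n - 1) := by
  have h1 : 1 ≤ n - k := by omega
  have h2 : n - k ≤ (n - 1) + 1 := by omega
  have hmain := main_lemma (αA / αB) (n - 1) (n - k) h1 h2
  have hst : (n - 1) + 1 - (n - k) = k := by omega
  rw [hst] at hmain
  rw [hmain]
  unfold S
  apply Finset.sum_congr rfl
  intro j hj
  rw [Finset.mem_Icc] at hj
  have hsign : (-1 : ℝ) ^ (n - 1 + 1 + j) = (-1 : ℝ) ^ (n - j) := by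
    rw [show n - 1 + 1 + j = (n - j) + 2 * j from by omega, pow_add, pow_mul, neg_one_sq,
      one_pow, mul_one]
  rw [hsign, mul_div_assoc]
end
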